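/- arXiv:2005.02441 — 9 statements merged into one kernel-verified Lean document; each statement's English description precedes it below -/
import Mathlib

section
/- Proposition 1, case m_B < μ_B (Eq. (12)): assume μ_B > m_B ≥ 1 and N_A ≥ 1. Let F₁ be the κ-μ shadowed CDF with parameters (ḡ, κ, μ, m) = (N_B·ȳ_B, κ_B, N_B·μ_B, N_B·m_B). Then for every x ≥ 0, [F₁(x)]^{N_A} = 1 + Σ_{k=1}^{N_A} (−1)^k·C(N_A,k)·Σ_{c=0}^{k} C(k,c)·Σ_{(p₁,…,p_{ν_B})∈ρ(c,ν_B)} (c!/(p₁!⋯p_{ν_B}!))·∏_{q=1}^{ν_B} [ (1/Δ₂ᴮ)^{ν_B−q}/(ν_B−q)!·Σ_{w=1}^{q} Aᴮ₂_w ]^{p_q}·Σ_{(s₁,…,s_{η_B})∈ρ(k−c,η_B)} ((k−c)!/(s₁!⋯s_{η_B}!))·∏_{t=1}^{η_B} [ (1/Δ₁ᴮ)^{η_B−t}/(η_B−t)!·Σ_{w=1}^{t} Aᴮ₁_w ]^{s_t}·exp(−x(k−c)/Δ₁ᴮ − x·c/Δ₂ᴮ)·x^{Σ_{t=1}^{η_B}(η_B−t)s_t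 + Σ_{q=1}^{ν_B}(ν_B−q)p_q}. -/
/- κ-μ shadowed parameters and mixture coefficients (case m < μ). -/

noncomputable def Δ₁ (g κ : ℝ) (μ : ℕ) : ℝ := g / (μ * (1 + κ))

noncomputable def Δ₂ (g κ : ℝ) (μ m : ℕ) : ℝ := ((μ * κ + m) / m) * g / (μ * (1 + κ))

noncomputable def A1 (κ : ℝ) (μ m j : ℕ) : ℝ :=
  (-1 : ℝ) ^ m * (Nat.choose (m + j - 2) (j - 1) : ℝ) *
    ((m : ℝ) / (μ * κ + m)) ^ m * ((μ * κ) / (μ * κ + m)) ^ (-(m : ℤ) - j + 1)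

noncomputable def A2 (κ : ℝ) (μ m j : ℕ) : ℝ :=
  (-1 : ℝ) ^ (j - 1) * (Nat.choose (μ - m + j - 2) (j - 1) : ℝ) *
    ((m : ℝ) / (μ * κ + m)) ^ (j - 1) * ((μ * κ) / (μ * κ + m)) ^ ((m : ℤ) - μ - j + 1)

/-- The κ-μ shadowed CDF in the case `m < μ`. -/
noncomputable def Fcdf1 (g κ : ℝ) (μ m : ℕ) (x : ℝ) : ℝ :=
  1 - (∑ j ∈ Finset.Icc 1 (μ - m), A1 κ μ m j * Real.exp (-x / Δ₁ g κ μ) *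
        ∑ r ∈ Finset.range (μ - m - j + 1), (x / Δ₁ g κ μ) ^ r / (Nat.factorial r : ℝ))
    - ∑ j ∈ Finset.Icc 1 m, A2 κ μ m j * Real.exp (-x / Δ₂ g κ μ m) *
        ∑ r ∈ Finset.range (m - j + 1), (x / Δ₂ g κ μ m) ^ r / (Nat.factorial r : ℝ)

open Finset

private lemma sum_split' (n : ℕ) (f : ℕ → ℝ) :
    ∑ k ∈ Finset.range (n + 1), f k = f 0 + ∑ k ∈ Finset.Icc 1 n, f k := by
  rw [Finset.sum_range_succ', add_comm]
  congr 1
  rw [← Finset.Ico_add_one_right_eq_Icc, Finset.sum_Ico_eq_sum_range]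
  simp [add_comm]

private lemma swap_sum' (ν : ℕ) (a b : ℕ → ℝ) :
    ∑ j ∈ Finset.Icc 1 ν, a j * ∑ r ∈ Finset.range (ν - j + 1), b r
      = ∑ q ∈ Finset.range ν, (∑ w ∈ Finset.Icc 1 (q + 1), a w) * b (ν - 1 - q) := by
  simp_rw [Finset.mul_sum, Finset.sum_mul]
  rw [Finset.sum_sigma', Finset.sum_sigma']
  refine Finset.sum_nbij' (fun z => ⟨ν - 1 - z.2, z.1⟩) (fun z => ⟨z.2, ν - 1 - z.1⟩)
    ?_ ?_ ?_ ?_ ?_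
  · rintro ⟨j, r⟩ hz
    simp only [Finset.mem_sigma, Finset.mem_Icc, Finset.mem_range] at hz ⊢
    omega
  · rintro ⟨q, w⟩ hz
    simp only [Finset.mem_sigma, Finset.mem_Icc, Finset.mem_range] at hz ⊢
    omega
  · rintro ⟨j, r⟩ hz
    simp only [Finset.mem_sigma, Finset.mem_Icc, Finset.mem_range] at hz
    have h2 : ν - 1 - (ν - 1 - r) = r := by omega
    simp only [h2]
  · rintro ⟨q, w⟩ hz
    simp only [Finset.mem_sigma, Finset.mem_Icc, Finset.mem_range] at hz
    have h2 : ν - 1 - (ν - 1 - q) = q := by omega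
    simp only [h2]
  · rintro ⟨j, r⟩ hz
    simp only [Finset.mem_sigma, Finset.mem_Icc, Finset.mem_range] at hz
    have h2 : ν - 1 - (ν - 1 - r) = r := by omega
    simp only [h2]

private lemma multinom_real (n c : ℕ) (f : Fin n → ℝ) :
    (∑ i, f i) ^ c =
      ∑ p ∈ Finset.Nat.antidiagonalTuple n c,
        ((Nat.factorial c : ℝ) / ∏ i, (Nat.factorial (p i) : ℝ)) * ∏ i, f i ^ p i := by
  rw [← Finset.piAntidiag_univ_fin_eq_antidiagonalTuple c n, Finset.sum_pow_eq_sum_piAntidiag]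
  refine Finset.sum_congr rfl fun p hp => ?_
  rw [Finset.mem_piAntidiag] at hp
  congr 1
  have hs := Nat.multinomial_spec Finset.univ p
  rw [hp.1] at hs
  have hne : (∏ i, (Nat.factorial (p i) : ℝ)) ≠ 0 :=
    Finset.prod_ne_zero_iff.2 fun i _ => Nat.cast_ne_zero.2 (Nat.factorial_ne_zero _)
  rw [eq_div_iff hne, mul_comm]
  exact_mod_cast congrArg (Nat.cast : ℕ → ℝ) hs

private lemma main_calc (η ν NA : ℕ) (a1 a2 : ℕ → ℝ) (D1 D2 x : ℝ) :
    (1 - (∑ j ∈ Finset.Icc 1 η, a1 j * Real.exp (-x / D1) *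
            ∑ r ∈ Finset.range (η - j + 1), (x / D1) ^ r / (Nat.factorial r : ℝ))
       - ∑ j ∈ Finset.Icc 1 ν, a2 j * Real.exp (-x / D2) *
            ∑ r ∈ Finset.range (ν - j + 1), (x / D2) ^ r / (Nat.factorial r : ℝ)) ^ NA
      = 1 + ∑ k ∈ Finset.Icc 1 NA, (-1 : ℝ) ^ k * (Nat.choose NA k : ℝ) *
          ∑ c ∈ Finset.range (k + 1), (Nat.choose k c : ℝ) *
            ∑ p ∈ Finset.Nat.antidiagonalTuple ν c,
              ((Nat.factorial c : ℝ) / ∏ q, (Nat.factorial (p q) : ℝ)) *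
              (∏ q : Fin ν,
                ((1 / D2) ^ (ν - 1 - q.1) / (Nat.factorial (ν - 1 - q.1) : ℝ) *
                  ∑ w ∈ Finset.Icc 1 (q.1 + 1), a2 w) ^ (p q)) *
              ∑ s ∈ Finset.Nat.antidiagonalTuple η (k - c),
                ((Nat.factorial (k - c) : ℝ) / ∏ t, (Nat.factorial (s t) : ℝ)) *
                (∏ t : Fin η,
                  ((1 / D1) ^ (η - 1 - t.1) / (Nat.factorial (η - 1 - t.1) : ℝ) *
                    ∑ w ∈ Finset.Icc 1 (t.1 + 1), a1 w) ^ (s t)) *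
                Real.exp (-x * ((k - c : ℕ) : ℝ) / D1 - x * (c : ℝ) / D2) *
                x ^ ((∑ t : Fin η, (η - 1 - t.1) * s t)
                    + (∑ q : Fin ν, (ν - 1 - q.1) * p q)) := by
  set E1 := Real.exp (-x / D1) with hE1
  set E2 := Real.exp (-x / D2) with hE2
  set T1 := ∑ q ∈ Finset.range η, (∑ w ∈ Finset.Icc 1 (q + 1), a1 w) *
      ((x / D1) ^ (η - 1 - q) / (Nat.factorial (η - 1 - q) : ℝ)) with hT1
  set T2 := ∑ q ∈ Finset.range ν, (∑ w ∈ Finset.Icc 1 (q + 1), a2 w) *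
      ((x / D2) ^ (ν - 1 - q) / (Nat.factorial (ν - 1 - q) : ℝ)) with hT2
  have hs1 := swap_sum' η a1 (fun r => (x / D1) ^ r / (Nat.factorial r : ℝ))
  have hs2 := swap_sum' ν a2 (fun r => (x / D2) ^ r / (Nat.factorial r : ℝ))
  beta_reduce at hs1 hs2
  have key1 : ∑ j ∈ Finset.Icc 1 η, a1 j * E1 *
      ∑ r ∈ Finset.range (η - j + 1), (x / D1) ^ r / (Nat.factorial r : ℝ) = E1 * T1 := by
    rw [hT1, ← hs1, Finset.mul_sum]
    exact Finset.sum_congr rfl fun j _ => by ring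
  have key2 : ∑ j ∈ Finset.Icc 1 ν, a2 j * E2 *
      ∑ r ∈ Finset.range (ν - j + 1), (x / D2) ^ r / (Nat.factorial r : ℝ) = E2 * T2 := by
    rw [hT2, ← hs2, Finset.mul_sum]
    exact Finset.sum_congr rfl fun j _ => by ring
  rw [key1, key2,
    show (1 : ℝ) - E1 * T1 - E2 * T2 = -(E2 * T2 + E1 * T1) + 1 from by ring,
    add_pow, sum_split']
  simp only [pow_zero, one_pow, Nat.choose_zero_right, Nat.cast_one, mul_one, one_mul]
  congr 1
  refine Finset.sum_congr rfl fun k hk => ?_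
  rw [neg_pow, mul_right_comm]
  congr 1
  rw [add_pow]
  refine Finset.sum_congr rfl fun c hc => ?_
  have hpow2 : T2 ^ c = ∑ p ∈ Finset.Nat.antidiagonalTuple ν c,
      ((Nat.factorial c : ℝ) / ∏ q, (Nat.factorial (p q) : ℝ)) *
        ((∏ q : Fin ν, ((1 / D2) ^ (ν - 1 - q.1) / (Nat.factorial (ν - 1 - q.1) : ℝ) *
            ∑ w ∈ Finset.Icc 1 (q.1 + 1), a2 w) ^ (p q)) *
          x ^ (∑ q : Fin ν, (ν - 1 - q.1) * p q)) := by
    have hrw : T2 = ∑ q : Fin ν,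
        ((1 / D2) ^ (ν - 1 - q.1) / (Nat.factorial (ν - 1 - q.1) : ℝ) *
          ∑ w ∈ Finset.Icc 1 (q.1 + 1), a2 w) * x ^ (ν - 1 - q.1) := by
      rw [hT2, ← Fin.sum_univ_eq_sum_range (fun q => (∑ w ∈ Finset.Icc 1 (q + 1), a2 w) *
          ((x / D2) ^ (ν - 1 - q) / (Nat.factorial (ν - 1 - q) : ℝ))) ν]
      exact Finset.sum_congr rfl fun q _ => by ring
    rw [hrw, multinom_real]
    refine Finset.sum_congr rfl fun p hp => ?_
    congr 1
    calc ∏ i : Fin ν, (((1 / D2) ^ (ν - 1 - i.1) / (Nat.factorial (ν - 1 - i.1) : ℝ) *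
            ∑ w ∈ Finset.Icc 1 (i.1 + 1), a2 w) * x ^ (ν - 1 - i.1)) ^ p i
        = ∏ i : Fin ν, (((1 / D2) ^ (ν - 1 - i.1) / (Nat.factorial (ν - 1 - i.1) : ℝ) *
            ∑ w ∈ Finset.Icc 1 (i.1 + 1), a2 w) ^ p i * x ^ ((ν - 1 - i.1) * p i)) :=
          Finset.prod_congr rfl fun i _ => by rw [mul_pow, ← pow_mul]
      _ = (∏ i : Fin ν, ((1 / D2) ^ (ν - 1 - i.1) / (Nat.factorial (ν - 1 - i.1) : ℝ) *
            ∑ w ∈ Finset.Icc 1 (i.1 + 1), a2 w) ^ p i) *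
          ∏ i : Fin ν, x ^ ((ν - 1 - i.1) * p i) := Finset.prod_mul_distrib
      _ = _ := by rw [Finset.prod_pow_eq_pow_sum]
  have hpow1 : T1 ^ (k - c) = ∑ s ∈ Finset.Nat.antidiagonalTuple η (k - c),
      ((Nat.factorial (k - c) : ℝ) / ∏ t, (Nat.factorial (s t) : ℝ)) *
        ((∏ t : Fin η, ((1 / D1) ^ (η - 1 - t.1) / (Nat.factorial (η - 1 - t.1) : ℝ) *
            ∑ w ∈ Finset.Icc 1 (t.1 + 1), a1 w) ^ (s t)) *
          x ^ (∑ t : Fin η, (η - 1 - t.1) * s t)) := by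
    have hrw : T1 = ∑ t : Fin η,
        ((1 / D1) ^ (η - 1 - t.1) / (Nat.factorial (η - 1 - t.1) : ℝ) *
          ∑ w ∈ Finset.Icc 1 (t.1 + 1), a1 w) * x ^ (η - 1 - t.1) := by
      rw [hT1, ← Fin.sum_univ_eq_sum_range (fun q => (∑ w ∈ Finset.Icc 1 (q + 1), a1 w) *
          ((x / D1) ^ (η - 1 - q) / (Nat.factorial (η - 1 - q) : ℝ))) η]
      exact Finset.sum_congr rfl fun q _ => by ring
    rw [hrw, multinom_real]
    refine Finset.sum_congr rfl fun s hsm => ?_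
    congr 1
    calc ∏ i : Fin η, (((1 / D1) ^ (η - 1 - i.1) / (Nat.factorial (η - 1 - i.1) : ℝ) *
            ∑ w ∈ Finset.Icc 1 (i.1 + 1), a1 w) * x ^ (η - 1 - i.1)) ^ s i
        = ∏ i : Fin η, (((1 / D1) ^ (η - 1 - i.1) / (Nat.factorial (η - 1 - i.1) : ℝ) *
            ∑ w ∈ Finset.Icc 1 (i.1 + 1), a1 w) ^ s i * x ^ ((η - 1 - i.1) * s i)) :=
          Finset.prod_congr rfl fun i _ => by rw [mul_pow, ← pow_mul]
      _ = (∏ i : Fin η, ((1 / D1) ^ (η - 1 - i.1) / (Nat.factorial (η - 1 - i.1) : ℝ) *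
            ∑ w ∈ Finset.Icc 1 (i.1 + 1), a1 w) ^ s i) *
          ∏ i : Fin η, x ^ ((η - 1 - i.1) * s i) := Finset.prod_mul_distrib
      _ = _ := by rw [Finset.prod_pow_eq_pow_sum]
  have hE : E1 ^ (k - c) * E2 ^ c
      = Real.exp (-x * ((k - c : ℕ) : ℝ) / D1 - x * (c : ℝ) / D2) := by
    rw [hE1, hE2, ← Real.exp_nat_mul, ← Real.exp_nat_mul, ← Real.exp_add]
    congr 1
    ring
  rw [mul_pow, mul_pow, hpow2, hpow1, ← hE]
  simp only [Finset.mul_sum, Finset.sum_mul]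
  rw [Finset.sum_comm]
  refine Finset.sum_congr rfl fun p hp => Finset.sum_congr rfl fun s hsm => by ring

open Finset in
/-- Proposition 1, case `m_B < μ_B` (Eq. (12)): closed form for the `N_A`-th power of the
Bob-side κ-μ shadowed CDF with parameters `(N_B ȳ_B, κ_B, N_B μ_B, N_B m_B)`.
Here `η_B = N_B μ_B - N_B m_B`, `ν_B = N_B m_B`, and `ρ(c, n)` is realized by
`Finset.Nat.antidiagonalTuple n c`. -/
theorem stmt2 (yB κB : ℝ) (μB mB NB NA : ℕ)
    (hyB : 0 < yB) (hκB : 0 < κB) (hmB : 1 ≤ mB) (hμB : mB < μB)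
    (hNB : 1 ≤ NB) (hNA : 1 ≤ NA) :
    ∀ x : ℝ, 0 ≤ x →
      (Fcdf1 (NB * yB) κB (NB * μB) (NB * mB) x) ^ NA =
        1 + ∑ k ∈ Finset.Icc 1 NA, (-1 : ℝ) ^ k * (Nat.choose NA k : ℝ) *
          ∑ c ∈ Finset.range (k + 1), (Nat.choose k c : ℝ) *
            ∑ p ∈ Finset.Nat.antidiagonalTuple (NB * mB) c,
              ((Nat.factorial c : ℝ) / ∏ q, (Nat.factorial (p q) : ℝ)) *
              (∏ q : Fin (NB * mB),
                ((1 / Δ₂ (NB * yB) κB (NB * μB) (NB * mB)) ^ (NB * mB - 1 - q.1) /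
                    (Nat.factorial (NB * mB - 1 - q.1) : ℝ) *
                  ∑ w ∈ Finset.Icc 1 (q.1 + 1), A2 κB (NB * μB) (NB * mB) w) ^ (p q)) *
              ∑ s ∈ Finset.Nat.antidiagonalTuple (NB * μB - NB * mB) (k - c),
                ((Nat.factorial (k - c) : ℝ) / ∏ t, (Nat.factorial (s t) : ℝ)) *
                (∏ t : Fin (NB * μB - NB * mB),
                  ((1 / Δ₁ (NB * yB) κB (NB * μB)) ^ (NB * μB - NB * mB - 1 - t.1) /
                      (Nat.factorial (NB * μB - NB * mB - 1 - t.1) : ℝ) *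
                    ∑ w ∈ Finset.Icc 1 (t.1 + 1), A1 κB (NB * μB) (NB * mB) w) ^ (s t)) *
                Real.exp (-x * ((k - c : ℕ) : ℝ) / Δ₁ (NB * yB) κB (NB * μB)
                    - x * (c : ℝ) / Δ₂ (NB * yB) κB (NB * μB) (NB * mB)) *
                x ^ ((∑ t : Fin (NB * μB - NB * mB), (NB * μB - NB * mB - 1 - t.1) * s t)
                    + (∑ q : Fin (NB * mB), (NB * mB - 1 - q.1) * p q)) := by
  intro x hx
  have h := main_calc (NB * μB - NB * mB) (NB * mB) NA
    (A1 κB (NB * μB) (NB * mB)) (A2 κB (NB * μB) (NB * mB))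
    (Δ₁ (NB * yB) κB (NB * μB)) (Δ₂ (NB * yB) κB (NB * μB) (NB * mB)) x
  simpa only [Fcdf1] using h
end

section
/- Proposition 1, case m_B ≥ μ_B (Eq. (13)): assume m_B ≥ μ_B ≥ 1 and N_A ≥ 1. Let F₁ be the κ-μ shadowed CDF with parameters (ḡ, κ, μ, m) = (N_B·ȳ_B, κ_B, N_B·μ_B, N_B·m_B). Then for every x ≥ 0, [F₁(x)]^{N_A} = 1 + Σ_{k=1}^{N_A} (−1)^k·C(N_A,k)·Σ_{(s₁,…,s_{ν_B})∈ρ(k,ν_B)} (k!/(s₁!⋯s_{ν_B}!))·∏_{t=1}^{ν_B} [ (1/Δ₂ᴮ)^{ν_B−t}/(ν_B−t)!·Σ_{w=0}^{min(t−1,β_B)} Bᴮ_w ]^{s_t}·e^{−kx/Δ₂ᴮ}·x^{Σ_{t=1}^{ν_B}(ν_B−t)s_t}. -/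
noncomputable def Bco (κ : ℝ) (μ m j : ℕ) : ℝ :=
  (Nat.choose (m - μ) j : ℝ) * ((m : ℝ) / (μ * κ + m)) ^ j *
    ((μ * κ) / (μ * κ + m)) ^ (m - μ - j)

/-- The κ-μ shadowed CDF in the case `m ≥ μ`. -/
noncomputable def Fcdf2 (g κ : ℝ) (μ m : ℕ) (x : ℝ) : ℝ :=
  1 - ∑ j ∈ Finset.range (m - μ + 1), Bco κ μ m j * Real.exp (-x / Δ₂ g κ μ m) *
        ∑ r ∈ Finset.range (m - j), (x / Δ₂ g κ μ m) ^ r / (Nat.factorial r : ℝ)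

open Finset in
lemma Fcdf2_eq (g κ : ℝ) (μ ν : ℕ) (hμ : 1 ≤ μ) (hμν : μ ≤ ν) (x : ℝ) :
    Fcdf2 g κ μ ν x = 1 - ∑ t : Fin ν,
      ((1 / Δ₂ g κ μ ν) ^ (ν - 1 - t.1) / (Nat.factorial (ν - 1 - t.1) : ℝ) *
        ∑ w ∈ Finset.range (min t.1 (ν - μ) + 1), Bco κ μ ν w) *
      (x ^ (ν - 1 - t.1) * Real.exp (-x / Δ₂ g κ μ ν)) := by
  unfold Fcdf2
  congr 1
  set Δ := Δ₂ g κ μ ν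
  set E := Real.exp (-x / Δ)
  simp_rw [Finset.mul_sum]
  rw [Finset.sum_comm' (t' := Finset.range ν)
    (s' := fun r => Finset.range (min (ν - 1 - r) (ν - μ) + 1))
    (by intro j r; simp only [Finset.mem_range]; omega)]
  rw [Fin.sum_univ_eq_sum_range
    (fun t => (∑ w ∈ Finset.range (min t (ν - μ) + 1),
        (1 / Δ) ^ (ν - 1 - t) / (Nat.factorial (ν - 1 - t) : ℝ) * Bco κ μ ν w) *
      (x ^ (ν - 1 - t) * E)) ν]
  rw [← Finset.sum_range_reflect]
  refine Finset.sum_congr rfl fun r hr => ?_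
  rw [Finset.mem_range] at hr
  have h1 : ν - 1 - (ν - 1 - r) = r := by omega
  rw [h1, Finset.sum_mul]
  refine Finset.sum_congr rfl fun j _ => ?_
  rw [div_eq_mul_one_div x Δ, mul_pow]
  ring

open Finset in
/-- Proposition 1, case `m_B ≥ μ_B` (Eq. (13)): closed form for the `N_A`-th power of the
Bob-side κ-μ shadowed CDF with parameters `(N_B ȳ_B, κ_B, N_B μ_B, N_B m_B)`.
Here `ν_B = N_B m_B`, `β_B = N_B m_B - N_B μ_B`, and `ρ(k, n)` is realized by
`Finset.Nat.antidiagonalTuple n k`. -/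
theorem stmt3 (yB κB : ℝ) (μB mB NB NA : ℕ)
    (hyB : 0 < yB) (hκB : 0 < κB) (hμB : 1 ≤ μB) (hmB : μB ≤ mB)
    (hNB : 1 ≤ NB) (hNA : 1 ≤ NA) :
    ∀ x : ℝ, 0 ≤ x →
      (Fcdf2 (NB * yB) κB (NB * μB) (NB * mB) x) ^ NA =
        1 + ∑ k ∈ Finset.Icc 1 NA, (-1 : ℝ) ^ k * (Nat.choose NA k : ℝ) *
          ∑ s ∈ Finset.Nat.antidiagonalTuple (NB * mB) k,
            ((Nat.factorial k : ℝ) / ∏ t, (Nat.factorial (s t) : ℝ)) *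
            (∏ t : Fin (NB * mB),
              ((1 / Δ₂ (NB * yB) κB (NB * μB) (NB * mB)) ^ (NB * mB - 1 - t.1) /
                  (Nat.factorial (NB * mB - 1 - t.1) : ℝ) *
                ∑ w ∈ Finset.range (min t.1 (NB * mB - NB * μB) + 1),
                  Bco κB (NB * μB) (NB * mB) w) ^ (s t)) *
            Real.exp (-(k : ℝ) * x / Δ₂ (NB * yB) κB (NB * μB) (NB * mB)) *
            x ^ (∑ t : Fin (NB * mB), (NB * mB - 1 - t.1) * s t) := by
  intro x hx
  have hμ : 1 ≤ NB * μB := by simpa using Nat.mul_le_mul hNB hμB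
  have hμν : NB * μB ≤ NB * mB := Nat.mul_le_mul_left _ hmB
  rw [Fcdf2_eq _ _ _ _ hμ hμν x]
  set ν := NB * mB with hν
  set Δ := Δ₂ (NB * yB) κB (NB * μB) ν with hΔ
  set E := Real.exp (-x / Δ) with hE
  set a : Fin ν → ℝ := fun t =>
    (1 / Δ) ^ (ν - 1 - t.1) / (Nat.factorial (ν - 1 - t.1) : ℝ) *
      ∑ w ∈ Finset.range (min t.1 (ν - NB * μB) + 1), Bco κB (NB * μB) ν w with ha
  set G : ℝ := ∑ t : Fin ν, a t * (x ^ (ν - 1 - t.1) * E) with hG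
  have h1 : (1 : ℝ) - G = -G + 1 := by ring
  rw [h1, add_pow]
  simp only [one_pow, mul_one]
  have hsplit : Finset.range (NA + 1) = insert 0 (Finset.Icc 1 NA) := by
    ext i; simp; omega
  rw [hsplit, Finset.sum_insert (by simp)]
  simp only [pow_zero, Nat.choose_zero_right, Nat.cast_one, one_mul, mul_one]
  congr 1
  refine Finset.sum_congr rfl fun k hk => ?_
  rw [neg_pow]
  have hGk : G ^ k = ∑ s ∈ Finset.Nat.antidiagonalTuple ν k,
      ((Nat.factorial k : ℝ) / ∏ t, (Nat.factorial (s t) : ℝ)) *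
      (∏ t : Fin ν, (a t) ^ (s t)) *
      Real.exp (-(k : ℝ) * x / Δ) *
      x ^ (∑ t : Fin ν, (ν - 1 - t.1) * s t) := by
    rw [hG, Finset.sum_pow_eq_sum_piAntidiag,
      Finset.piAntidiag_univ_fin_eq_antidiagonalTuple]
    refine Finset.sum_congr rfl fun s hs => ?_
    have hsk : ∑ t, s t = k := Finset.Nat.mem_antidiagonalTuple.mp hs
    have hmulti : (Nat.multinomial Finset.univ s : ℝ) =
        (Nat.factorial k : ℝ) / ∏ t, (Nat.factorial (s t) : ℝ) := by
      rw [eq_div_iff]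
      · rw [← Nat.cast_prod, ← Nat.cast_mul, mul_comm, Nat.multinomial_spec, hsk]
      · exact Finset.prod_ne_zero_iff.mpr fun t _ => by
          exact_mod_cast (Nat.factorial_pos (s t)).ne'
    have hEk : E ^ k = Real.exp (-(k : ℝ) * x / Δ) := by
      rw [hE, ← Real.exp_nat_mul]
      congr 1
      ring
    simp_rw [mul_pow, Finset.prod_mul_distrib, ← pow_mul]
    rw [Finset.prod_pow_eq_pow_sum Finset.univ (fun t => (ν - 1 - t.1) * s t) x]
    rw [Finset.prod_pow_eq_pow_sum Finset.univ s E]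
    rw [hsk]
    linear_combination (∏ t : Fin ν, a t ^ s t) * (x ^ ∑ t : Fin ν, (ν - 1 - t.1) * s t) *
        (E ^ k) * hmulti +
      (((Nat.factorial k : ℝ) / ∏ t : Fin ν, (Nat.factorial (s t) : ℝ)) *
        (∏ t : Fin ν, a t ^ s t)) * (x ^ ∑ t : Fin ν, (ν - 1 - t.1) * s t) * hEk
  rw [hGk]
  ring
end

section
/- Proposition 2, case m_B < μ_B (Eq. (14)): assume μ_B > m_B ≥ 1 and N_A ≥ 1, and let F_B(x) = [F₁(x)]^{N_A} where F₁ is the κ-μ shadowed CDF with parameters (N_B·ȳ_B, κ_B, N_B·μ_B, N_B·m_B). Then at every x > 0, F_B has derivative f_B(x) = Σ_{k=1}^{N_A} (−1)^k·C(N_A,k)·Σ_{c=0}^{k} C(k,c)·Σ_{(p)∈ρ(c,ν_B)} (c!/(p₁!⋯p_{ν_B}!))·∏_{q=1}^{ν_B} [ (1/Δ₂ᴮ)^{ν_B−q}/(ν_B−q)!·Σ_{w=1}^{q} Aᴮ₂_w ]^{p_q}·Σ_{(s)∈ρ(k−c,η_B)} ((k−c)!/(s₁!⋯s_{η_B}!))·∏_{t=1}^{η_B}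 [ (1/Δ₁ᴮ)^{η_B−t}/(η_B−t)!·Σ_{w=1}^{t} Aᴮ₁_w ]^{s_t}·(exp(−x((k−c)/Δ₁ᴮ + c/Δ₂ᴮ))/(Δ₁ᴮ·Δ₂ᴮ))·x^{S−1}·(Δ₁ᴮ·Δ₂ᴮ·S − x·(Δ₁ᴮ·c + Δ₂ᴮ·(k−c))), where S = Σ_{t=1}^{η_B}(η_B−t)s_t + Σ_{q=1}^{ν_B}(ν_B−q)p_q. -/
open Finset

noncomputable def Bc (A : ℕ → ℝ) (D : ℝ) (n t : ℕ) : ℝ :=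
  (1/D)^(n-1-t) / (Nat.factorial (n-1-t) : ℝ) * ∑ w ∈ Finset.Icc 1 (t+1), A w

def Spow (n : ℕ) (s : Fin n → ℕ) : ℕ := ∑ t, (n-1-t.1) * s t

noncomputable def Mfac (n c : ℕ) (p : Fin n → ℕ) : ℝ :=
  (Nat.factorial c : ℝ) / ∏ q, (Nat.factorial (p q) : ℝ)

lemma swap_sum (n : ℕ) (f : ℕ → ℕ → ℝ) :
    ∑ j ∈ Icc 1 n, ∑ r ∈ range (n - j + 1), f j r
      = ∑ r ∈ range n, ∑ j ∈ Icc 1 (n - r), f j r := by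
  apply Finset.sum_comm'
  intro j r
  simp only [mem_Icc, mem_range]
  omega

lemma poly_eq (n : ℕ) (A : ℕ → ℝ) (D x : ℝ) :
    ∑ j ∈ Icc 1 n, A j * Real.exp (-x / D) *
        ∑ r ∈ range (n - j + 1), (x / D) ^ r / (Nat.factorial r : ℝ)
      = Real.exp (-x / D) * ∑ t : Fin n, Bc A D n t.1 * x ^ (n - 1 - t.1) := by
  have h1 : ∀ j ∈ Icc 1 n, A j * Real.exp (-x/D) *
      ∑ r ∈ range (n - j + 1), (x / D) ^ r / (Nat.factorial r : ℝ)
      = ∑ r ∈ range (n - j + 1), Real.exp (-x/D) * (A j * ((1/D)^r / (Nat.factorial r : ℝ) * x ^ r)) := by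
    intro j _
    rw [Finset.mul_sum]
    refine Finset.sum_congr rfl fun r _ => ?_
    rw [div_pow, div_pow, one_pow]
    ring
  rw [Finset.sum_congr rfl h1, swap_sum]
  rw [Fin.sum_univ_eq_sum_range (fun t => Bc A D n t * x ^ (n-1-t)), Finset.mul_sum,
    ← Finset.sum_range_reflect (fun t => Real.exp (-x/D) * (Bc A D n t * x ^ (n-1-t))) n]
  refine Finset.sum_congr rfl fun r hr => ?_
  rw [mem_range] at hr
  have h2 : n - 1 - (n - 1 - r) = r := by omega
  have h3 : n - 1 - r + 1 = n - r := by omega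
  simp only [Bc, h2, h3, Finset.mul_sum]
  rw [Finset.sum_mul, Finset.mul_sum]
  refine Finset.sum_congr rfl fun j _ => ?_
  ring

lemma adt_eq (n c : ℕ) : Finset.Nat.antidiagonalTuple n c
    = Finset.piAntidiag (Finset.univ : Finset (Fin n)) c := by
  ext p
  simp [Finset.Nat.mem_antidiagonalTuple, Finset.mem_piAntidiag]

lemma mult_thm (n c : ℕ) (y : Fin n → ℝ) :
    (∑ q, y q) ^ c = ∑ p ∈ Finset.Nat.antidiagonalTuple n c,
      ((Nat.factorial c : ℝ) / ∏ q, (Nat.factorial (p q) : ℝ)) * ∏ q, y q ^ p q := by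
  rw [adt_eq, Finset.sum_pow_eq_sum_piAntidiag]
  refine Finset.sum_congr rfl fun p hp => ?_
  rw [Finset.mem_piAntidiag] at hp
  congr 1
  have hs := Nat.multinomial_spec (Finset.univ : Finset (Fin n)) p
  rw [hp.1] at hs
  have : ((∏ i, Nat.factorial (p i) : ℕ) : ℝ) * (Nat.multinomial Finset.univ p : ℝ)
      = (Nat.factorial c : ℝ) := by exact_mod_cast congrArg (Nat.cast : ℕ → ℝ) hs
  have hne : ((∏ i, Nat.factorial (p i) : ℕ) : ℝ) ≠ 0 := by
    positivity
  field_simp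
  push_cast at this ⊢
  linarith [this]

lemma hda (a : ℝ) (S : ℕ) (x : ℝ) :
    HasDerivAt (fun y : ℝ => Real.exp (-(a * y)) * y ^ S)
      (Real.exp (-(a * x)) * ((S : ℝ) * x ^ (S - 1)) - a * Real.exp (-(a * x)) * x ^ S) x := by
  have h1 : HasDerivAt (fun y : ℝ => Real.exp (-(a * y))) (-a * Real.exp (-(a * x))) x := by
    have := (((hasDerivAt_id x).const_mul a).neg).exp
    simpa [mul_comm] using this
  have := h1.fun_mul (hasDerivAt_pow S x)
  refine this.congr_deriv ?_
  ring

lemma term_eq (D1 D2 x : ℝ) (hx : 0 < x) (hD1 : D1 ≠ 0) (hD2 : D2 ≠ 0) (S c d : ℕ) :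
    Real.exp (-(((d : ℝ)/D1 + (c : ℝ)/D2) * x)) * ((S : ℝ) * x ^ (S - 1))
      - ((d : ℝ)/D1 + (c : ℝ)/D2) * Real.exp (-(((d : ℝ)/D1 + (c : ℝ)/D2) * x)) * x ^ S
    = Real.exp (-x * ((d : ℝ)/D1 + (c : ℝ)/D2)) / (D1 * D2) * x ^ ((S : ℤ) - 1) *
        (D1 * D2 * (S : ℝ) - x * (D1 * (c : ℝ) + D2 * (d : ℝ))) := by
  have hxne : x ≠ 0 := hx.ne'
  rw [show -x * ((d : ℝ)/D1 + (c : ℝ)/D2) = -(((d : ℝ)/D1 + (c : ℝ)/D2) * x) by ring]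
  rw [zpow_sub₀ hxne, zpow_natCast, zpow_one]
  rcases S with _ | n
  · simp only [Nat.cast_zero, pow_zero, zero_mul, mul_zero, zero_sub, Nat.zero_sub]
    field_simp
    ring
  · have h1 : n + 1 - 1 = n := rfl
    rw [h1, pow_succ]
    push_cast
    field_simp
    ring

lemma pow_E (n c : ℕ) (A : ℕ → ℝ) (D x : ℝ) :
    (Real.exp (-x / D) * ∑ t : Fin n, Bc A D n t.1 * x ^ (n - 1 - t.1)) ^ c
      = ∑ p ∈ Finset.Nat.antidiagonalTuple n c,
          Mfac n c p * (∏ q, Bc A D n q.1 ^ p q) *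
            (Real.exp (-((c : ℝ) / D * x)) * x ^ Spow n p) := by
  rw [mul_pow, mult_thm, Finset.mul_sum]
  refine Finset.sum_congr rfl fun p hp => ?_
  have hprod : ∀ t : Fin n, (Bc A D n t.1 * x ^ (n - 1 - t.1)) ^ p t
      = Bc A D n t.1 ^ p t * x ^ ((n - 1 - t.1) * p t) := by
    intro t; rw [mul_pow, pow_mul]
  rw [Finset.prod_congr rfl fun t _ => hprod t, Finset.prod_mul_distrib,
    Finset.prod_pow_eq_pow_sum]
  have hexp : Real.exp (-x / D) ^ c = Real.exp (-((c : ℝ) / D * x)) := by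
    rw [← Real.exp_nat_mul]
    congr 1
    ring
  rw [hexp, Spow, Mfac]
  ring

lemma expand (n₁ n₂ N : ℕ) (A₁ A₂ : ℕ → ℝ) (D1 D2 : ℝ) (x : ℝ) :
    (1 - (∑ j ∈ Icc 1 n₁, A₁ j * Real.exp (-x / D1) *
            ∑ r ∈ range (n₁ - j + 1), (x / D1) ^ r / (Nat.factorial r : ℝ))
       - ∑ j ∈ Icc 1 n₂, A₂ j * Real.exp (-x / D2) *
            ∑ r ∈ range (n₂ - j + 1), (x / D2) ^ r / (Nat.factorial r : ℝ)) ^ N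
  = 1 + ∑ k ∈ Icc 1 N, (-1 : ℝ) ^ k * (N.choose k : ℝ) *
      ∑ c ∈ range (k + 1), (k.choose c : ℝ) *
        ∑ p ∈ Finset.Nat.antidiagonalTuple n₂ c,
          Mfac n₂ c p * (∏ q, Bc A₂ D2 n₂ q.1 ^ p q) *
            ∑ s ∈ Finset.Nat.antidiagonalTuple n₁ (k - c),
              Mfac n₁ (k - c) s * (∏ t, Bc A₁ D1 n₁ t.1 ^ s t) *
                (Real.exp (-((((k - c : ℕ) : ℝ) / D1 + (c : ℝ) / D2) * x)) *
                  x ^ (Spow n₁ s + Spow n₂ p)) := by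
  rw [poly_eq, poly_eq]
  set E1 : ℝ := Real.exp (-x / D1) * ∑ t : Fin n₁, Bc A₁ D1 n₁ t.1 * x ^ (n₁ - 1 - t.1) with hE1
  set E2 : ℝ := Real.exp (-x / D2) * ∑ t : Fin n₂, Bc A₂ D2 n₂ t.1 * x ^ (n₂ - 1 - t.1) with hE2
  have hmul : ∀ k c : ℕ, E2 ^ c * E1 ^ (k - c)
      = ∑ p ∈ Finset.Nat.antidiagonalTuple n₂ c,
          Mfac n₂ c p * (∏ q, Bc A₂ D2 n₂ q.1 ^ p q) *
            ∑ s ∈ Finset.Nat.antidiagonalTuple n₁ (k - c),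
              Mfac n₁ (k - c) s * (∏ t, Bc A₁ D1 n₁ t.1 ^ s t) *
                (Real.exp (-((((k - c : ℕ) : ℝ) / D1 + (c : ℝ) / D2) * x)) *
                  x ^ (Spow n₁ s + Spow n₂ p)) := by
    intro k c
    rw [hE1, hE2, pow_E, pow_E, Finset.sum_mul]
    refine Finset.sum_congr rfl fun p _ => ?_
    rw [mul_assoc]
    congr 1
    rw [Finset.mul_sum]
    refine Finset.sum_congr rfl fun s _ => ?_
    have hexp : Real.exp (-((c : ℝ) / D2 * x)) * Real.exp (-(((k - c : ℕ) : ℝ) / D1 * x))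
        = Real.exp (-((((k - c : ℕ) : ℝ) / D1 + (c : ℝ) / D2) * x)) := by
      rw [← Real.exp_add]; congr 1; ring
    have hpow : x ^ Spow n₂ p * x ^ Spow n₁ s = x ^ (Spow n₁ s + Spow n₂ p) := by
      rw [← pow_add, Nat.add_comm]
    calc Real.exp (-((c : ℝ) / D2 * x)) * x ^ Spow n₂ p *
          (Mfac n₁ (k - c) s * (∏ t, Bc A₁ D1 n₁ t.1 ^ s t) *
            (Real.exp (-(((k - c : ℕ) : ℝ) / D1 * x)) * x ^ Spow n₁ s))
        = Mfac n₁ (k - c) s * (∏ t, Bc A₁ D1 n₁ t.1 ^ s t) *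
            ((Real.exp (-((c : ℝ) / D2 * x)) * Real.exp (-(((k - c : ℕ) : ℝ) / D1 * x))) *
              (x ^ Spow n₂ p * x ^ Spow n₁ s)) := by ring
      _ = _ := by rw [hexp, hpow]
  have hstep : ∀ k : ℕ, (E2 + E1) ^ k = ∑ c ∈ range (k + 1), (k.choose c : ℝ) *
      ∑ p ∈ Finset.Nat.antidiagonalTuple n₂ c,
        Mfac n₂ c p * (∏ q, Bc A₂ D2 n₂ q.1 ^ p q) *
          ∑ s ∈ Finset.Nat.antidiagonalTuple n₁ (k - c),
            Mfac n₁ (k - c) s * (∏ t, Bc A₁ D1 n₁ t.1 ^ s t) *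
              (Real.exp (-((((k - c : ℕ) : ℝ) / D1 + (c : ℝ) / D2) * x)) *
                x ^ (Spow n₁ s + Spow n₂ p)) := by
    intro k
    rw [add_pow]
    refine Finset.sum_congr rfl fun c _ => ?_
    rw [← hmul k c]
    ring
  rw [show (1 - E1 - E2 : ℝ) = -(E2 + E1) + 1 by ring, add_pow]
  simp only [one_pow, mul_one]
  rw [show range (N + 1) = insert 0 (Icc 1 N) from by ext a; simp [Finset.mem_Icc]; omega,
    Finset.sum_insert (by simp)]
  simp only [pow_zero, Nat.choose_zero_right, Nat.cast_one, mul_one]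
  congr 1
  refine Finset.sum_congr rfl fun k hk => ?_
  rw [neg_pow, hstep k]
  ring

open Finset in
/-- Proposition 2, case `m_B < μ_B` (Eq. (14)): the PDF of the TAS/MRC legitimate-link SNR,
i.e. the derivative of `[F₁(x)]^{N_A}`, where `F₁` is the Bob-side κ-μ shadowed CDF with
parameters `(N_B ȳ_B, κ_B, N_B μ_B, N_B m_B)`. -/
theorem stmt4 (yB κB : ℝ) (μB mB NB NA : ℕ)
    (hyB : 0 < yB) (hκB : 0 < κB) (hmB : 1 ≤ mB) (hμB : mB < μB)
    (hNB : 1 ≤ NB) (hNA : 1 ≤ NA) :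
    ∀ x : ℝ, 0 < x →
      HasDerivAt (fun y => (Fcdf1 (NB * yB) κB (NB * μB) (NB * mB) y) ^ NA)
        (∑ k ∈ Finset.Icc 1 NA, (-1 : ℝ) ^ k * (Nat.choose NA k : ℝ) *
          ∑ c ∈ Finset.range (k + 1), (Nat.choose k c : ℝ) *
            ∑ p ∈ Finset.Nat.antidiagonalTuple (NB * mB) c,
              ((Nat.factorial c : ℝ) / ∏ q, (Nat.factorial (p q) : ℝ)) *
              (∏ q : Fin (NB * mB),
                ((1 / Δ₂ (NB * yB) κB (NB * μB) (NB * mB)) ^ (NB * mB - 1 - q.1) /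
                    (Nat.factorial (NB * mB - 1 - q.1) : ℝ) *
                  ∑ w ∈ Finset.Icc 1 (q.1 + 1), A2 κB (NB * μB) (NB * mB) w) ^ (p q)) *
              ∑ s ∈ Finset.Nat.antidiagonalTuple (NB * μB - NB * mB) (k - c),
                ((Nat.factorial (k - c) : ℝ) / ∏ t, (Nat.factorial (s t) : ℝ)) *
                (∏ t : Fin (NB * μB - NB * mB),
                  ((1 / Δ₁ (NB * yB) κB (NB * μB)) ^ (NB * μB - NB * mB - 1 - t.1) /
                      (Nat.factorial (NB * μB - NB * mB - 1 - t.1) : ℝ) *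
                    ∑ w ∈ Finset.Icc 1 (t.1 + 1), A1 κB (NB * μB) (NB * mB) w) ^ (s t)) *
                (Real.exp (-x * (((k - c : ℕ) : ℝ) / Δ₁ (NB * yB) κB (NB * μB)
                      + (c : ℝ) / Δ₂ (NB * yB) κB (NB * μB) (NB * mB))) /
                  (Δ₁ (NB * yB) κB (NB * μB) * Δ₂ (NB * yB) κB (NB * μB) (NB * mB))) *
                x ^ ((((∑ t : Fin (NB * μB - NB * mB), (NB * μB - NB * mB - 1 - t.1) * s t)
                    + (∑ q : Fin (NB * mB), (NB * mB - 1 - q.1) * p q) : ℕ) : ℤ) - 1) *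
                (Δ₁ (NB * yB) κB (NB * μB) * Δ₂ (NB * yB) κB (NB * μB) (NB * mB) *
                    (((∑ t : Fin (NB * μB - NB * mB), (NB * μB - NB * mB - 1 - t.1) * s t)
                      + (∑ q : Fin (NB * mB), (NB * mB - 1 - q.1) * p q) : ℕ) : ℝ)
                  - x * (Δ₁ (NB * yB) κB (NB * μB) * (c : ℝ)
                      + Δ₂ (NB * yB) κB (NB * μB) (NB * mB) * ((k - c : ℕ) : ℝ))))
        x := by
  intro x hx
  have hNBpos : 0 < (NB : ℝ) := by exact_mod_cast hNB
  have hg : (0:ℝ) < (NB : ℝ) * yB := mul_pos hNBpos hyB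
  have hμpos : (0:ℝ) < ((NB * μB : ℕ) : ℝ) := by
    have : 0 < NB * μB := Nat.mul_pos hNB (by omega)
    exact_mod_cast this
  have hmpos : (0:ℝ) < ((NB * mB : ℕ) : ℝ) := by
    have : 0 < NB * mB := Nat.mul_pos hNB (by omega)
    exact_mod_cast this
  have hκ1 : (0:ℝ) < 1 + κB := by linarith
  have hD1 : 0 < Δ₁ ((NB : ℝ) * yB) κB (NB * μB) := by
    simp only [Δ₁]
    exact div_pos hg (mul_pos hμpos hκ1)
  have hD2 : 0 < Δ₂ ((NB : ℝ) * yB) κB (NB * μB) (NB * mB) := by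
    simp only [Δ₂]
    apply div_pos (mul_pos (div_pos _ hmpos) hg) (mul_pos hμpos hκ1)
    have : (0:ℝ) < ((NB * μB : ℕ) : ℝ) * κB := mul_pos hμpos hκB
    linarith
  have hFun : (fun y => (Fcdf1 (NB * yB) κB (NB * μB) (NB * mB) y) ^ NA)
      = fun y => 1 + ∑ k ∈ Finset.Icc 1 NA, (-1 : ℝ) ^ k * (NA.choose k : ℝ) *
          ∑ c ∈ range (k + 1), (k.choose c : ℝ) *
            ∑ p ∈ Finset.Nat.antidiagonalTuple (NB * mB) c,
              Mfac (NB * mB) c p *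
                (∏ q, Bc (A2 κB (NB * μB) (NB * mB)) (Δ₂ ((NB : ℝ) * yB) κB (NB * μB) (NB * mB))
                    (NB * mB) q.1 ^ p q) *
                ∑ s ∈ Finset.Nat.antidiagonalTuple (NB * μB - NB * mB) (k - c),
                  Mfac (NB * μB - NB * mB) (k - c) s *
                    (∏ t, Bc (A1 κB (NB * μB) (NB * mB)) (Δ₁ ((NB : ℝ) * yB) κB (NB * μB))
                        (NB * μB - NB * mB) t.1 ^ s t) *
                    (Real.exp (-((((k - c : ℕ) : ℝ) / Δ₁ ((NB : ℝ) * yB) κB (NB * μB)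
                        + (c : ℝ) / Δ₂ ((NB : ℝ) * yB) κB (NB * μB) (NB * mB)) * y)) *
                      y ^ (Spow (NB * μB - NB * mB) s + Spow (NB * mB) p)) := by
    funext y
    simp only [Fcdf1]
    exact expand (NB * μB - NB * mB) (NB * mB) NA (A1 κB (NB * μB) (NB * mB))
      (A2 κB (NB * μB) (NB * mB)) (Δ₁ ((NB : ℝ) * yB) κB (NB * μB))
      (Δ₂ ((NB : ℝ) * yB) κB (NB * μB) (NB * mB)) y
  rw [hFun]
  have hD : HasDerivAt (fun y => 1 + ∑ k ∈ Finset.Icc 1 NA, (-1 : ℝ) ^ k * (NA.choose k : ℝ) *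
          ∑ c ∈ range (k + 1), (k.choose c : ℝ) *
            ∑ p ∈ Finset.Nat.antidiagonalTuple (NB * mB) c,
              Mfac (NB * mB) c p *
                (∏ q, Bc (A2 κB (NB * μB) (NB * mB)) (Δ₂ ((NB : ℝ) * yB) κB (NB * μB) (NB * mB))
                    (NB * mB) q.1 ^ p q) *
                ∑ s ∈ Finset.Nat.antidiagonalTuple (NB * μB - NB * mB) (k - c),
                  Mfac (NB * μB - NB * mB) (k - c) s *
                    (∏ t, Bc (A1 κB (NB * μB) (NB * mB)) (Δ₁ ((NB : ℝ) * yB) κB (NB * μB))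
                        (NB * μB - NB * mB) t.1 ^ s t) *
                    (Real.exp (-((((k - c : ℕ) : ℝ) / Δ₁ ((NB : ℝ) * yB) κB (NB * μB)
                        + (c : ℝ) / Δ₂ ((NB : ℝ) * yB) κB (NB * μB) (NB * mB)) * y)) *
                      y ^ (Spow (NB * μB - NB * mB) s + Spow (NB * mB) p)))
      (∑ k ∈ Finset.Icc 1 NA, (-1 : ℝ) ^ k * (NA.choose k : ℝ) *
          ∑ c ∈ range (k + 1), (k.choose c : ℝ) *
            ∑ p ∈ Finset.Nat.antidiagonalTuple (NB * mB) c,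
              Mfac (NB * mB) c p *
                (∏ q, Bc (A2 κB (NB * μB) (NB * mB)) (Δ₂ ((NB : ℝ) * yB) κB (NB * μB) (NB * mB))
                    (NB * mB) q.1 ^ p q) *
                ∑ s ∈ Finset.Nat.antidiagonalTuple (NB * μB - NB * mB) (k - c),
                  Mfac (NB * μB - NB * mB) (k - c) s *
                    (∏ t, Bc (A1 κB (NB * μB) (NB * mB)) (Δ₁ ((NB : ℝ) * yB) κB (NB * μB))
                        (NB * μB - NB * mB) t.1 ^ s t) *
                    (Real.exp (-((((k - c : ℕ) : ℝ) / Δ₁ ((NB : ℝ) * yB) κB (NB * μB)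
                          + (c : ℝ) / Δ₂ ((NB : ℝ) * yB) κB (NB * μB) (NB * mB)) * x)) *
                        (((Spow (NB * μB - NB * mB) s + Spow (NB * mB) p : ℕ) : ℝ) *
                          x ^ (Spow (NB * μB - NB * mB) s + Spow (NB * mB) p - 1))
                      - (((k - c : ℕ) : ℝ) / Δ₁ ((NB : ℝ) * yB) κB (NB * μB)
                          + (c : ℝ) / Δ₂ ((NB : ℝ) * yB) κB (NB * μB) (NB * mB)) *
                        Real.exp (-((((k - c : ℕ) : ℝ) / Δ₁ ((NB : ℝ) * yB) κB (NB * μB)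
                          + (c : ℝ) / Δ₂ ((NB : ℝ) * yB) κB (NB * μB) (NB * mB)) * x)) *
                        x ^ (Spow (NB * μB - NB * mB) s + Spow (NB * mB) p))) x := by
    apply HasDerivAt.const_add
    apply HasDerivAt.fun_sum
    intro k _
    apply HasDerivAt.const_mul
    apply HasDerivAt.fun_sum
    intro c _
    apply HasDerivAt.const_mul
    apply HasDerivAt.fun_sum
    intro p _
    apply HasDerivAt.const_mul
    apply HasDerivAt.fun_sum
    intro s _
    apply HasDerivAt.const_mul
    exact hda _ _ x
  convert hD using 1
  refine (Finset.sum_congr rfl fun k _ => ?_).symm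
  congr 1
  refine Finset.sum_congr rfl fun c _ => ?_
  congr 1
  refine Finset.sum_congr rfl fun p _ => ?_
  congr 1
  refine Finset.sum_congr rfl fun s _ => ?_
  rw [term_eq (Δ₁ ((NB : ℝ) * yB) κB (NB * μB)) (Δ₂ ((NB : ℝ) * yB) κB (NB * μB) (NB * mB))
    x hx hD1.ne' hD2.ne' (Spow (NB * μB - NB * mB) s + Spow (NB * mB) p) c (k - c)]
  simp only [Mfac, Bc, Spow]
  push_cast
  ring
end

section
/- Proposition 2, case m_B ≥ μ_B (Eq. (15)): assume m_B ≥ μ_B ≥ 1 and N_A ≥ 1, and let F_B(x) = [F₁(x)]^{N_A} where F₁ is the κ-μ shadowed CDF with parameters (N_B·ȳ_B, κ_B, N_B·μ_B, N_B·m_B). Then at every x > 0, F_B has derivative f_B(x) = Σ_{k=1}^{N_A} (−1)^k·C(N_A,k)·Σ_{(s)∈ρ(k,ν_B)} (k!/(s₁!⋯s_{ν_B}!))·∏_{t=1}^{ν_B} [ (1/Δ₂ᴮ)^{ν_B−t}/(ν_B−t)!·Σ_{w=0}^{min(t−1,β_B)} Bᴮ_w ]^{s_t}·(e^{−kx/Δ₂ᴮ}/Δ₂ᴮ)·x^{S−1}·(Δ₂ᴮ·S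 − k·x), where S = Σ_{t=1}^{ν_B}(ν_B−t)s_t. -/
open Finset

/-- `S x^{S-1} = S x^S x⁻¹` for nonzero `x` (nat subtraction). -/
lemma pow_pred_mul' (x : ℝ) (hx : x ≠ 0) (S : ℕ) :
    (S : ℝ) * x ^ (S - 1) = (S : ℝ) * x ^ S * x⁻¹ := by
  cases S with
  | zero => simp
  | succ n =>
      rw [Nat.succ_sub_one, pow_succ, mul_assoc, mul_assoc, mul_inv_cancel₀ hx, mul_one]

lemma one_sub_pow' (a : ℝ) (n : ℕ) :
    (1 - a) ^ n = ∑ k ∈ Finset.range (n + 1), (-1 : ℝ) ^ k * (n.choose k : ℝ) * a ^ k := by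
  rw [sub_eq_add_neg, add_comm, add_pow]
  refine Finset.sum_congr rfl fun k _ => ?_
  rw [neg_pow]
  ring

/-- Double sum swap: the κ-μ shadowed CDF series, reorganized as a polynomial in `y`. -/
lemma sumA (ν μ' : ℕ) (hμ : 1 ≤ μ') (hν : μ' ≤ ν) (B : ℕ → ℝ) (Δ y : ℝ) :
    (∑ j ∈ Finset.range (ν - μ' + 1), B j *
        ∑ r ∈ Finset.range (ν - j), (y / Δ) ^ r / (Nat.factorial r : ℝ))
      = ∑ t : Fin ν, ((1 / Δ) ^ (ν - 1 - t.1) / (Nat.factorial (ν - 1 - t.1) : ℝ) *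
          ∑ w ∈ Finset.range (min t.1 (ν - μ') + 1), B w) * y ^ (ν - 1 - t.1) := by
  have hν1 : 1 ≤ ν := le_trans hμ hν
  simp only [Finset.mul_sum, Finset.sum_mul]
  rw [Finset.sum_sigma', Finset.sum_sigma']
  refine Finset.sum_nbij' (i := fun p => ⟨⟨ν - 1 - p.2, by omega⟩, p.1⟩)
    (j := fun q => ⟨q.2, ν - 1 - q.1.1⟩) ?_ ?_ ?_ ?_ ?_
  · rintro ⟨j, r⟩ hm
    simp only [Finset.mem_sigma, Finset.mem_range] at hm
    simp only [Finset.mem_sigma, Finset.mem_univ, Finset.mem_range, true_and]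
    omega
  · rintro ⟨t, w⟩ hm
    have ht := t.2
    simp only [Finset.mem_sigma, Finset.mem_univ, Finset.mem_range, true_and] at hm
    simp only [Finset.mem_sigma, Finset.mem_range]
    omega
  · rintro ⟨j, r⟩ hm
    simp only [Finset.mem_sigma, Finset.mem_range] at hm
    simp only [Sigma.mk.inj_iff, heq_eq_eq, show ν - 1 - (ν - 1 - r) = r from by omega,
      and_self]
  · rintro ⟨t, w⟩ hm
    have ht := t.2
    simp only [Sigma.mk.inj_iff, heq_eq_eq, Fin.ext_iff,
      show ν - 1 - (ν - 1 - t.1) = t.1 from by omega, and_self]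
  · rintro ⟨j, r⟩ hm
    simp only [Finset.mem_sigma, Finset.mem_range] at hm
    have hr : ν - 1 - (ν - 1 - r) = r := by omega
    show B j * ((y / Δ) ^ r / (Nat.factorial r : ℝ))
      = (1 / Δ) ^ (ν - 1 - (ν - 1 - r)) / (Nat.factorial (ν - 1 - (ν - 1 - r)) : ℝ) * B j *
          y ^ (ν - 1 - (ν - 1 - r))
    rw [hr]
    simp only [div_pow, one_pow]
    ring

/-- Multinomial expansion of the `k`-th power of the series. -/
lemma pow_sum_exp (ν k : ℕ) (Δ : ℝ) (c : Fin ν → ℝ) (y : ℝ) :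
    (Real.exp (-y / Δ) * ∑ t : Fin ν, c t * y ^ (ν - 1 - t.1)) ^ k
      = ∑ s ∈ Finset.Nat.antidiagonalTuple ν k,
          ((k.factorial : ℝ) / ∏ t, ((s t).factorial : ℝ)) * (∏ t, c t ^ s t) *
          (Real.exp (-(k : ℝ) * y / Δ) * y ^ (∑ t, (ν - 1 - t.1) * s t)) := by
  rw [mul_pow, ← Finset.piAntidiag_univ_fin_eq_antidiagonalTuple k ν,
    Finset.sum_pow_eq_sum_piAntidiag, Finset.mul_sum]
  refine Finset.sum_congr rfl fun s hs => ?_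
  simp only [Finset.mem_piAntidiag] at hs
  have hsum : ∑ t, s t = k := hs.1
  have hne : (∏ t, ((s t).factorial : ℝ)) ≠ 0 := by positivity
  have hmul : ((Nat.multinomial Finset.univ s : ℝ))
      = (k.factorial : ℝ) / ∏ t, ((s t).factorial : ℝ) := by
    rw [eq_div_iff hne]
    have h := Nat.multinomial_spec Finset.univ s
    rw [hsum] at h
    rw [mul_comm] at h
    exact_mod_cast congrArg (Nat.cast : ℕ → ℝ) h
  have hexp : Real.exp (-y / Δ) ^ k = Real.exp (-(k : ℝ) * y / Δ) := by
    rw [← Real.exp_nat_mul]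
    congr 1
    ring
  have hprod : ∏ t, (c t * y ^ (ν - 1 - t.1)) ^ s t
      = (∏ t, c t ^ s t) * y ^ (∑ t, (ν - 1 - t.1) * s t) := by
    simp_rw [mul_pow, Finset.prod_mul_distrib, ← pow_mul, Finset.prod_pow_eq_pow_sum]
  rw [hmul, hprod, hexp]
  ring

/-- The derivative term identity. -/
lemma derivTermEq (E Δ kk x : ℝ) (hΔ : Δ ≠ 0) (hx : x ≠ 0) (S : ℕ) :
    E * (-kk / Δ) * x ^ S + E * ((S : ℝ) * x ^ (S - 1))
      = E / Δ * x ^ ((S : ℤ) - 1) * (Δ * (S : ℝ) - kk * x) := by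
  rw [zpow_sub_one₀ hx, zpow_natCast, pow_pred_mul' x hx S]
  field_simp
  ring

/-- General form of Proposition 2, case `m ≥ μ`. -/
lemma mainDeriv (ν NA : ℕ) (hν : 1 ≤ ν) (Δ : ℝ) (hΔ : 0 < Δ)
    (c : Fin ν → ℝ) (x : ℝ) (hx : 0 < x) :
    HasDerivAt (fun y => (1 - Real.exp (-y / Δ) * ∑ t : Fin ν, c t * y ^ (ν - 1 - t.1)) ^ NA)
      (∑ k ∈ Finset.Icc 1 NA, (-1 : ℝ) ^ k * (NA.choose k : ℝ) *
        ∑ s ∈ Finset.Nat.antidiagonalTuple ν k,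
          ((k.factorial : ℝ) / ∏ t, ((s t).factorial : ℝ)) * (∏ t, c t ^ s t) *
          (Real.exp (-(k : ℝ) * x / Δ) / Δ) *
          x ^ (((∑ t, (ν - 1 - t.1) * s t : ℕ) : ℤ) - 1) *
          (Δ * ((∑ t, (ν - 1 - t.1) * s t : ℕ) : ℝ) - (k : ℝ) * x)) x := by
  have hfun : (fun y => (1 - Real.exp (-y / Δ) * ∑ t : Fin ν, c t * y ^ (ν - 1 - t.1)) ^ NA)
      = fun y => ∑ k ∈ Finset.range (NA + 1), (-1 : ℝ) ^ k * (NA.choose k : ℝ) *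
          ∑ s ∈ Finset.Nat.antidiagonalTuple ν k,
            ((k.factorial : ℝ) / ∏ t, ((s t).factorial : ℝ)) * (∏ t, c t ^ s t) *
            (Real.exp (-(k : ℝ) * y / Δ) * y ^ (∑ t, (ν - 1 - t.1) * s t)) := by
    funext y
    rw [one_sub_pow']
    exact Finset.sum_congr rfl fun k _ => by rw [pow_sum_exp]
  rw [hfun]
  have hD : HasDerivAt
      (fun y => ∑ k ∈ Finset.range (NA + 1), (-1 : ℝ) ^ k * (NA.choose k : ℝ) *
          ∑ s ∈ Finset.Nat.antidiagonalTuple ν k,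
            ((k.factorial : ℝ) / ∏ t, ((s t).factorial : ℝ)) * (∏ t, c t ^ s t) *
            (Real.exp (-(k : ℝ) * y / Δ) * y ^ (∑ t, (ν - 1 - t.1) * s t)))
      (∑ k ∈ Finset.range (NA + 1), (-1 : ℝ) ^ k * (NA.choose k : ℝ) *
          ∑ s ∈ Finset.Nat.antidiagonalTuple ν k,
            ((k.factorial : ℝ) / ∏ t, ((s t).factorial : ℝ)) * (∏ t, c t ^ s t) *
            (Real.exp (-(k : ℝ) * x / Δ) * (-(k : ℝ) / Δ) * x ^ (∑ t, (ν - 1 - t.1) * s t)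
              + Real.exp (-(k : ℝ) * x / Δ) *
                (((∑ t, (ν - 1 - t.1) * s t : ℕ) : ℝ) * x ^ ((∑ t, (ν - 1 - t.1) * s t) - 1))))
      x := by
    apply HasDerivAt.fun_sum
    intro k _
    apply HasDerivAt.const_mul
    apply HasDerivAt.fun_sum
    intro s _
    apply HasDerivAt.const_mul
    have h1 : HasDerivAt (fun y : ℝ => -(k : ℝ) * y / Δ) (-(k : ℝ) / Δ) x := by
      simpa using ((hasDerivAt_id x).const_mul (-(k : ℝ))).div_const Δ
    exact h1.exp.mul (hasDerivAt_pow _ x)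
  convert hD using 1
  rw [show Finset.range (NA + 1) = insert 0 (Finset.Icc 1 NA) by ext n; simp; omega,
    Finset.sum_insert (by simp)]
  have h0 : (-1 : ℝ) ^ 0 * (NA.choose 0 : ℝ) *
      ∑ s ∈ Finset.Nat.antidiagonalTuple ν 0,
        ((Nat.factorial 0 : ℝ) / ∏ t, ((s t).factorial : ℝ)) * (∏ t, c t ^ s t) *
        (Real.exp (-(0 : ℕ) * x / Δ) * (-(0 : ℕ) / Δ) * x ^ (∑ t, (ν - 1 - t.1) * s t)
          + Real.exp (-(0 : ℕ) * x / Δ) *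
            (((∑ t, (ν - 1 - t.1) * s t : ℕ) : ℝ) * x ^ ((∑ t, (ν - 1 - t.1) * s t) - 1))) = 0 := by
    rw [pow_zero, one_mul, Nat.choose_zero_right, Nat.cast_one, one_mul]
    apply Finset.sum_eq_zero
    intro s hs
    rw [Finset.Nat.mem_antidiagonalTuple] at hs
    have hS0 : ∑ t, (ν - 1 - t.1) * s t = 0 := by
      apply Finset.sum_eq_zero
      intro t _
      have : s t = 0 := by
        by_contra h
        have := Finset.sum_eq_zero_iff.mp hs t (Finset.mem_univ t)
        exact h this
      simp [this]
    rw [hS0]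
    simp
  rw [h0, zero_add]
  refine Finset.sum_congr rfl fun k hk => ?_
  congr 1
  refine Finset.sum_congr rfl fun s hs => ?_
  rw [derivTermEq (Real.exp (-(k : ℝ) * x / Δ)) Δ (k : ℝ) x hΔ.ne' hx.ne'
    (∑ t, (ν - 1 - t.1) * s t)]
  ring

open Finset in
/-- Proposition 2, case `m_B ≥ μ_B` (Eq. (15)): the PDF of the TAS/MRC legitimate-link SNR,
i.e. the derivative of `[F₁(x)]^{N_A}`, where `F₁` is the Bob-side κ-μ shadowed CDF with
parameters `(N_B ȳ_B, κ_B, N_B μ_B, N_B m_B)`. -/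
theorem stmt5 (yB κB : ℝ) (μB mB NB NA : ℕ)
    (hyB : 0 < yB) (hκB : 0 < κB) (hμB : 1 ≤ μB) (hmB : μB ≤ mB)
    (hNB : 1 ≤ NB) (hNA : 1 ≤ NA) :
    ∀ x : ℝ, 0 < x →
      HasDerivAt (fun y => (Fcdf2 (NB * yB) κB (NB * μB) (NB * mB) y) ^ NA)
        (∑ k ∈ Finset.Icc 1 NA, (-1 : ℝ) ^ k * (Nat.choose NA k : ℝ) *
          ∑ s ∈ Finset.Nat.antidiagonalTuple (NB * mB) k,
            ((Nat.factorial k : ℝ) / ∏ t, (Nat.factorial (s t) : ℝ)) *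
            (∏ t : Fin (NB * mB),
              ((1 / Δ₂ (NB * yB) κB (NB * μB) (NB * mB)) ^ (NB * mB - 1 - t.1) /
                  (Nat.factorial (NB * mB - 1 - t.1) : ℝ) *
                ∑ w ∈ Finset.range (min t.1 (NB * mB - NB * μB) + 1),
                  Bco κB (NB * μB) (NB * mB) w) ^ (s t)) *
            (Real.exp (-(k : ℝ) * x / Δ₂ (NB * yB) κB (NB * μB) (NB * mB)) /
              Δ₂ (NB * yB) κB (NB * μB) (NB * mB)) *
            x ^ (((∑ t : Fin (NB * mB), (NB * mB - 1 - t.1) * s t : ℕ) : ℤ) - 1) *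
            (Δ₂ (NB * yB) κB (NB * μB) (NB * mB) *
                ((∑ t : Fin (NB * mB), (NB * mB - 1 - t.1) * s t : ℕ) : ℝ)
              - (k : ℝ) * x))
        x := by
  intro x hx
  have hμ1 : 1 ≤ NB * μB := Nat.one_le_iff_ne_zero.mpr (Nat.mul_ne_zero (by omega) (by omega))
  have hμν : NB * μB ≤ NB * mB := Nat.mul_le_mul_left NB hmB
  have hν1 : 1 ≤ NB * mB := le_trans hμ1 hμν
  set Δ := Δ₂ (NB * yB) κB (NB * μB) (NB * mB) with hΔdef
  have hΔ : 0 < Δ := by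
    have h1 : (0 : ℝ) < ((NB * μB : ℕ) : ℝ) := by exact_mod_cast hμ1
    have h2 : (0 : ℝ) < ((NB * mB : ℕ) : ℝ) := by exact_mod_cast hν1
    have h3 : (0 : ℝ) < (NB : ℝ) := by exact_mod_cast hNB
    rw [hΔdef]
    unfold Δ₂
    positivity
  have hF : ∀ y : ℝ, Fcdf2 (NB * yB) κB (NB * μB) (NB * mB) y
      = 1 - Real.exp (-y / Δ) * ∑ t : Fin (NB * mB),
          ((1 / Δ) ^ (NB * mB - 1 - t.1) / (Nat.factorial (NB * mB - 1 - t.1) : ℝ) *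
            ∑ w ∈ Finset.range (min t.1 (NB * mB - NB * μB) + 1),
              Bco κB (NB * μB) (NB * mB) w) * y ^ (NB * mB - 1 - t.1) := by
    intro y
    unfold Fcdf2
    rw [← hΔdef]
    congr 1
    rw [← sumA (NB * mB) (NB * μB) hμ1 hμν (Bco κB (NB * μB) (NB * mB)) Δ y, Finset.mul_sum]
    exact Finset.sum_congr rfl fun j _ => by ring
  have hfeq : (fun y => (Fcdf2 (NB * yB) κB (NB * μB) (NB * mB) y) ^ NA)
      = fun y => (1 - Real.exp (-y / Δ) * ∑ t : Fin (NB * mB),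
          ((1 / Δ) ^ (NB * mB - 1 - t.1) / (Nat.factorial (NB * mB - 1 - t.1) : ℝ) *
            ∑ w ∈ Finset.range (min t.1 (NB * mB - NB * μB) + 1),
              Bco κB (NB * μB) (NB * mB) w) * y ^ (NB * mB - 1 - t.1)) ^ NA :=
    funext fun y => by rw [hF y]
  rw [hfeq]
  exact mainDeriv (NB * mB) NA hν1 Δ hΔ
    (fun t => (1 / Δ) ^ (NB * mB - 1 - t.1) / (Nat.factorial (NB * mB - 1 - t.1) : ℝ) *
      ∑ w ∈ Finset.range (min t.1 (NB * mB - NB * μB) + 1),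
        Bco κB (NB * μB) (NB * mB) w) x hx
end

section
/- Proposition 3, case m_i < μ_i (Eq. (19)): assume μ_B > m_B ≥ 1, μ_E > m_E ≥ 1, N_A ≥ 1 and τ ≥ 1. Let F_B(x) = [F₁(x)]^{N_A} with F₁ the κ-μ shadowed CDF with parameters (N_B·ȳ_B, κ_B, N_B·μ_B, N_B·m_B), and let f_E be Eve's PDF. Then ∫₀^∞ F_B(τγ + τ − 1)·f_E(γ) dγ = Σ_{k=0}^{N_A} (−1)^k·C(N_A,k)·Σ_{c=0}^{k} C(k,c)·Σ_{(s)∈ρ(k−c,η_B)} ((k−c)!/(s₁!⋯s_{η_B}!))·∏_{t=1}^{η_B} [ (1/Δ₁ᴮ)^{η_B−t}/(η_B−t)!·Σ_{w=1}^{t} Aᴮ₁_w ]^{s_t}·Σ_{(p)∈ρ(c,ν_B)} (c!/(p₁!⋯p_{ν_B}!))·∏_{q=1}^{ν_B} [ (1/Δ₂ᴮ)^{ν_B−q}/(ν_B−q)!·Σ_{w=1}^{q} Aᴮ₂_w ]^{p_q}·exp(−(τ−1)·((k−c)/Δ₁ᴮ + c/Δ₂ᴮ))·Σ_{b=0}^{S}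 C(S, b)·(τ−1)^{S−b}·τ^b·[ Σ_{j=1}^{η_E} (Aᴱ₁ⱼ/((Δ₁ᴱ)^{η_E−j+1}·(η_E−j)!))·(1+b+η_E−j−1)!·(τ(k−c)/Δ₁ᴮ + τc/Δ₂ᴮ + 1/Δ₁ᴱ)^{−(1+b+η_E−j)} + Σ_{j=1}^{ν_E} (Aᴱ₂ⱼ/((Δ₂ᴱ)^{ν_E−j+1}·(ν_E−j)!))·(1+b+ν_E−j−1)!·(τ(k−c)/Δ₁ᴮ + τc/Δ₂ᴮ + 1/Δ₂ᴱ)^{−(1+b+ν_E−j)} ], where S = Σ_{t=1}^{η_B}(η_B−t)s_t + Σ_{q=1}^{ν_B}(ν_B−q)p_q. -/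
open MeasureTheory Finset

/-- Eve's MRC PDF in the case `m < μ` (a signed mixture of gamma densities). -/
noncomputable def fpdf1 (g κ : ℝ) (μ m : ℕ) (γ : ℝ) : ℝ :=
  (∑ j ∈ Finset.Icc 1 (μ - m), A1 κ μ m j * γ ^ (μ - m - j) * Real.exp (-γ / Δ₁ g κ μ) /
      ((Δ₁ g κ μ) ^ (μ - m - j + 1) * (Nat.factorial (μ - m - j) : ℝ)))
  + ∑ j ∈ Finset.Icc 1 m, A2 κ μ m j * γ ^ (m - j) * Real.exp (-γ / Δ₂ g κ μ m) /
      ((Δ₂ g κ μ m) ^ (m - j + 1) * (Nat.factorial (m - j) : ℝ))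


namespace SOPaux
open MeasureTheory Finset Real


lemma integrable_aux (n : ℕ) {a : ℝ} (ha : 0 < a) :
    MeasureTheory.IntegrableOn (fun t : ℝ => t ^ n * Real.exp (-(a * t))) (Set.Ioi 0) := by
  have := integrableOn_rpow_mul_exp_neg_mul_rpow (p := 1) (s := n) (b := a)
    (lt_of_lt_of_le neg_one_lt_zero (Nat.cast_nonneg n)) one_pos ha
  simpa only [Real.rpow_one, Real.rpow_natCast, neg_mul] using this

lemma integral_aux (n : ℕ) {a : ℝ} (ha : 0 < a) :
    ∫ t in Set.Ioi (0:ℝ), t ^ n * Real.exp (-(a * t)) = (Nat.factorial n : ℝ) / a ^ (n + 1) := by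
  have h := integral_rpow_mul_exp_neg_mul_Ioi (a := (n : ℝ) + 1) (r := a) (by positivity) ha
  have h2 : ∀ t : ℝ, t ^ ((n : ℝ) + 1 - 1) * Real.exp (-(a * t)) = t ^ n * Real.exp (-(a * t)) := by
    intro t
    rw [add_sub_cancel_right, Real.rpow_natCast]
  simp only [h2] at h
  rw [h, Real.Gamma_nat_eq_factorial,
    show ((n : ℝ) + 1) = ((n + 1 : ℕ) : ℝ) by push_cast; ring, Real.rpow_natCast]
  rw [div_pow, one_pow, one_div, inv_mul_eq_div]

lemma cdf_collapse (η : ℕ) (d : ℝ) (a : ℕ → ℝ) (x : ℝ) :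
    ∑ j ∈ Icc 1 η, a j * Real.exp (-x / d) *
        ∑ r ∈ range (η - j + 1), (x / d) ^ r / (Nat.factorial r : ℝ)
      = Real.exp (-x / d) *
        ∑ t : Fin η,
          ((1 / d) ^ (η - 1 - t.1) / (Nat.factorial (η - 1 - t.1) : ℝ) *
              ∑ w ∈ Icc 1 (t.1 + 1), a w) * x ^ (η - 1 - t.1) := by
  have h1 : ∀ j ∈ Icc 1 η, a j * Real.exp (-x/d) *
      ∑ r ∈ range (η - j + 1), (x/d) ^ r / (Nat.factorial r : ℝ)
      = ∑ r ∈ range (η - j + 1), a j * Real.exp (-x/d) * ((x/d) ^ r / (Nat.factorial r : ℝ)) :=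
    fun j _ => mul_sum _ _ _
  rw [sum_congr rfl h1]
  rw [sum_comm' (t' := range η) (s' := fun r => Icc 1 (η - r))
    (by intro j r; simp only [mem_Icc, mem_range]; omega)]
  rw [Fin.sum_univ_eq_sum_range (fun t =>
    ((1 / d) ^ (η - 1 - t) / (Nat.factorial (η - 1 - t) : ℝ) *
      ∑ w ∈ Icc 1 (t + 1), a w) * x ^ (η - 1 - t))]
  have h5 : ∑ i ∈ range η,
        ((1 / d) ^ (η - 1 - i) / (Nat.factorial (η - 1 - i) : ℝ) *
          ∑ w ∈ Icc 1 (i + 1), a w) * x ^ (η - 1 - i)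
      = ∑ r ∈ range η,
        ((1 / d) ^ r / (Nat.factorial r : ℝ) * ∑ w ∈ Icc 1 (η - r), a w) * x ^ r := by
    refine sum_nbij' (fun i => η - 1 - i) (fun r => η - 1 - r) ?_ ?_ ?_ ?_ ?_
    · intro i hi; simp only [mem_range] at *; omega
    · intro r hr; simp only [mem_range] at *; omega
    · intro i hi; simp only [mem_range] at hi; omega
    · intro r hr; simp only [mem_range] at hr; omega
    · intro i hi; rw [mem_range] at hi
      rw [show η - (η - 1 - i) = i + 1 by omega]
  rw [h5, mul_sum]
  refine sum_congr rfl fun r hr => ?_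
  simp only [mul_sum, sum_mul]
  refine sum_congr rfl fun j _ => ?_
  rw [div_pow, div_pow, one_pow]
  ring

lemma pow_expand (u v w : ℝ) (n : ℕ) :
    (1 - u - v) ^ n * w
      = ∑ k ∈ range (n + 1), (-1 : ℝ) ^ k * (n.choose k : ℝ) *
          ∑ c ∈ range (k + 1), (k.choose c : ℝ) * (u ^ (k - c) * (v ^ c * w)) := by
  rw [show (1 : ℝ) - u - v = (-(u + v)) + 1 by ring, add_pow, sum_mul]
  refine sum_congr rfl fun k _ => ?_
  rw [show (-(u+v) : ℝ) ^ k = (-1 : ℝ)^k * (v + u)^k by rw [add_comm v u, neg_pow],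
    add_pow v u k]
  simp only [one_pow, mul_one, sum_mul, mul_sum]
  exact sum_congr rfl fun c _ => by ring

lemma multi_expand {n : ℕ} (f : Fin n → ℝ) (e : Fin n → ℕ) (x : ℝ) (N : ℕ) :
    (∑ t : Fin n, f t * x ^ e t) ^ N
      = ∑ s ∈ Finset.Nat.antidiagonalTuple n N,
          ((Nat.factorial N : ℝ) / ∏ t, (Nat.factorial (s t) : ℝ)) *
            (∏ t, f t ^ s t) * x ^ (∑ t, e t * s t) := by
  rw [← Finset.piAntidiag_univ_fin_eq_antidiagonalTuple, Finset.sum_pow_eq_sum_piAntidiag]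
  refine sum_congr rfl fun s hs => ?_
  rw [Finset.mem_piAntidiag] at hs
  have hsum : ∑ t, s t = N := hs.1
  have hcast : ((Nat.multinomial univ s : ℕ) : ℝ)
      = (Nat.factorial N : ℝ) / ∏ t, (Nat.factorial (s t) : ℝ) := by
    rw [eq_div_iff (by positivity), ← Nat.cast_prod, ← Nat.cast_mul, mul_comm,
      Nat.multinomial_spec, hsum]
  rw [hcast]
  have hprod : ∏ t, (f t * x ^ e t) ^ s t = (∏ t, f t ^ s t) * x ^ (∑ t, e t * s t) := by
    rw [← Finset.prod_pow_eq_pow_sum]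
    rw [← Finset.prod_mul_distrib]
    exact Finset.prod_congr rfl fun t _ => by rw [mul_pow, pow_mul]
  rw [hprod, mul_assoc]

lemma binom_expand (τ γ : ℝ) (S : ℕ) :
    (τ * γ + τ - 1) ^ S
      = ∑ b ∈ range (S + 1), (S.choose b : ℝ) * (τ - 1) ^ (S - b) * τ ^ b * γ ^ b := by
  rw [show τ * γ + τ - 1 = (τ * γ) + (τ - 1) by ring, add_pow]
  exact sum_congr rfl fun b _ => by rw [mul_pow]; ring

theorem main (d1 d2 e1 e2 : ℝ) (hd1 : 0 < d1) (hd2 : 0 < d2) (he1 : 0 < e1) (he2 : 0 < e2)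
    (a1 a2 b1 b2 : ℕ → ℝ) (ηB νB ηE νE NA : ℕ) (τ : ℝ) (hτ : 1 ≤ τ) :
    (∫ γ in Set.Ioi (0:ℝ),
        (1 - (∑ j ∈ Finset.Icc 1 ηB, a1 j * Real.exp (-(τ * γ + τ - 1) / d1) *
              ∑ r ∈ Finset.range (ηB - j + 1), ((τ * γ + τ - 1) / d1) ^ r / (Nat.factorial r : ℝ))
          - ∑ j ∈ Finset.Icc 1 νB, a2 j * Real.exp (-(τ * γ + τ - 1) / d2) *
              ∑ r ∈ Finset.range (νB - j + 1), ((τ * γ + τ - 1) / d2) ^ r / (Nat.factorial r : ℝ)) ^ NA *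
        ((∑ j ∈ Finset.Icc 1 ηE, b1 j * γ ^ (ηE - j) * Real.exp (-γ / e1) /
              (e1 ^ (ηE - j + 1) * (Nat.factorial (ηE - j) : ℝ)))
          + ∑ j ∈ Finset.Icc 1 νE, b2 j * γ ^ (νE - j) * Real.exp (-γ / e2) /
              (e2 ^ (νE - j + 1) * (Nat.factorial (νE - j) : ℝ)))) =
      ∑ k ∈ range (NA + 1), (-1:ℝ)^k * (NA.choose k : ℝ) *
        ∑ c ∈ range (k + 1), (k.choose c : ℝ) *
          ∑ s ∈ Finset.Nat.antidiagonalTuple ηB (k - c),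
            ((Nat.factorial (k-c) : ℝ) / ∏ t, (Nat.factorial (s t) : ℝ)) *
            (∏ t : Fin ηB, ((1/d1)^(ηB-1-t.1) / (Nat.factorial (ηB-1-t.1) : ℝ) *
                ∑ w ∈ Icc 1 (t.1+1), a1 w) ^ (s t)) *
            ∑ p ∈ Finset.Nat.antidiagonalTuple νB c,
              ((Nat.factorial c : ℝ) / ∏ q, (Nat.factorial (p q) : ℝ)) *
              (∏ q : Fin νB, ((1/d2)^(νB-1-q.1) / (Nat.factorial (νB-1-q.1) : ℝ) *
                  ∑ w ∈ Icc 1 (q.1+1), a2 w) ^ (p q)) *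
              Real.exp (-(τ-1) * (((k-c:ℕ):ℝ)/d1 + (c:ℝ)/d2)) *
              ∑ b ∈ range (((∑ t : Fin ηB, (ηB-1-t.1) * s t) + (∑ q : Fin νB, (νB-1-q.1) * p q)) + 1),
                (((∑ t : Fin ηB, (ηB-1-t.1) * s t) + (∑ q : Fin νB, (νB-1-q.1) * p q)).choose b : ℝ) *
                (τ-1)^((((∑ t : Fin ηB, (ηB-1-t.1) * s t) + (∑ q : Fin νB, (νB-1-q.1) * p q))) - b) * τ^b *
                ((∑ j ∈ Icc 1 ηE, b1 j / (e1^(ηE-j+1) * (Nat.factorial (ηE-j):ℝ)) *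
                    (Nat.factorial (b + (ηE-j)) : ℝ) /
                    (τ * ((k-c:ℕ):ℝ)/d1 + τ * (c:ℝ)/d2 + 1/e1) ^ (1 + b + (ηE-j)))
                  + ∑ j ∈ Icc 1 νE, b2 j / (e2^(νE-j+1) * (Nat.factorial (νE-j):ℝ)) *
                    (Nat.factorial (b + (νE-j)) : ℝ) /
                    (τ * ((k-c:ℕ):ℝ)/d1 + τ * (c:ℝ)/d2 + 1/e2) ^ (1 + b + (νE-j))) := by

  have hτ0 : (0:ℝ) < τ := lt_of_lt_of_le one_pos hτ
  have hα1 : ∀ k c : ℕ, 0 < τ * ((k-c:ℕ):ℝ)/d1 + τ * (c:ℝ)/d2 + 1/e1 := by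
    intro k c
    have h1 : 0 ≤ τ * ((k-c:ℕ):ℝ)/d1 := div_nonneg (mul_nonneg hτ0.le (Nat.cast_nonneg _)) hd1.le
    have h2 : 0 ≤ τ * (c:ℝ)/d2 := div_nonneg (mul_nonneg hτ0.le (Nat.cast_nonneg _)) hd2.le
    have h3 : 0 < 1/e1 := by positivity
    linarith
  have hα2 : ∀ k c : ℕ, 0 < τ * ((k-c:ℕ):ℝ)/d1 + τ * (c:ℝ)/d2 + 1/e2 := by
    intro k c
    have h1 : 0 ≤ τ * ((k-c:ℕ):ℝ)/d1 := div_nonneg (mul_nonneg hτ0.le (Nat.cast_nonneg _)) hd1.le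
    have h2 : 0 ≤ τ * (c:ℝ)/d2 := div_nonneg (mul_nonneg hτ0.le (Nat.cast_nonneg _)) hd2.le
    have h3 : 0 < 1/e2 := by positivity
    linarith
  trans (∫ γ in Set.Ioi (0:ℝ),
      ∑ k ∈ range (NA + 1), (-1:ℝ)^k * (NA.choose k : ℝ) *
        ∑ c ∈ range (k + 1), (k.choose c : ℝ) *
          ∑ s ∈ Finset.Nat.antidiagonalTuple ηB (k - c),
            ((Nat.factorial (k-c) : ℝ) / ∏ t, (Nat.factorial (s t) : ℝ)) *
            (∏ t : Fin ηB, ((1/d1)^(ηB-1-t.1) / (Nat.factorial (ηB-1-t.1) : ℝ) *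
                ∑ w ∈ Icc 1 (t.1+1), a1 w) ^ (s t)) *
            ∑ p ∈ Finset.Nat.antidiagonalTuple νB c,
              ((Nat.factorial c : ℝ) / ∏ q, (Nat.factorial (p q) : ℝ)) *
              (∏ q : Fin νB, ((1/d2)^(νB-1-q.1) / (Nat.factorial (νB-1-q.1) : ℝ) *
                  ∑ w ∈ Icc 1 (q.1+1), a2 w) ^ (p q)) *
              Real.exp (-(τ-1) * (((k-c:ℕ):ℝ)/d1 + (c:ℝ)/d2)) *
              ∑ b ∈ range (((∑ t : Fin ηB, (ηB-1-t.1) * s t) + (∑ q : Fin νB, (νB-1-q.1) * p q)) + 1),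
                (((∑ t : Fin ηB, (ηB-1-t.1) * s t) + (∑ q : Fin νB, (νB-1-q.1) * p q)).choose b : ℝ) *
                (τ-1)^((((∑ t : Fin ηB, (ηB-1-t.1) * s t) + (∑ q : Fin νB, (νB-1-q.1) * p q))) - b) * τ^b *
                ((∑ j ∈ Icc 1 ηE, b1 j / (e1^(ηE-j+1) * (Nat.factorial (ηE-j):ℝ)) *
                    (γ^(b + (ηE-j)) * Real.exp (-((τ * ((k-c:ℕ):ℝ)/d1 + τ * (c:ℝ)/d2 + 1/e1) * γ))))
                  + ∑ j ∈ Icc 1 νE, b2 j / (e2^(νE-j+1) * (Nat.factorial (νE-j):ℝ)) *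
                    (γ^(b + (νE-j)) * Real.exp (-((τ * ((k-c:ℕ):ℝ)/d1 + τ * (c:ℝ)/d2 + 1/e2) * γ)))))
  · refine setIntegral_congr_fun measurableSet_Ioi fun γ _ => ?_
    rw [cdf_collapse ηB d1 a1 (τ * γ + τ - 1), cdf_collapse νB d2 a2 (τ * γ + τ - 1),
      pow_expand]
    refine sum_congr rfl fun k _ => ?_
    congr 1
    refine sum_congr rfl fun c _ => ?_
    congr 1
    have hEXP : Real.exp (-(τ*γ+τ-1)/d1) ^ (k-c) * Real.exp (-(τ*γ+τ-1)/d2) ^ c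
        = Real.exp (-(τ-1) * (((k-c:ℕ):ℝ)/d1 + (c:ℝ)/d2)) *
          Real.exp (-((τ * ((k-c:ℕ):ℝ)/d1 + τ * (c:ℝ)/d2) * γ)) := by
      rw [← Real.exp_nat_mul, ← Real.exp_nat_mul, ← Real.exp_add, ← Real.exp_add]
      congr 1
      ring
    rw [mul_pow, mul_pow,
      multi_expand (fun t : Fin ηB => (1/d1)^(ηB-1-t.1) / (Nat.factorial (ηB-1-t.1) : ℝ) *
        ∑ w ∈ Icc 1 (t.1+1), a1 w) (fun t : Fin ηB => ηB-1-t.1) (τ*γ+τ-1) (k-c),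
      multi_expand (fun q : Fin νB => (1/d2)^(νB-1-q.1) / (Nat.factorial (νB-1-q.1) : ℝ) *
        ∑ w ∈ Icc 1 (q.1+1), a2 w) (fun q : Fin νB => νB-1-q.1) (τ*γ+τ-1) c]
    trans (∑ s ∈ Finset.Nat.antidiagonalTuple ηB (k - c),
      ∑ p ∈ Finset.Nat.antidiagonalTuple νB c,
        (((Nat.factorial (k-c) : ℝ) / ∏ t, (Nat.factorial (s t) : ℝ)) *
          (∏ t : Fin ηB, ((1/d1)^(ηB-1-t.1) / (Nat.factorial (ηB-1-t.1) : ℝ) *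
              ∑ w ∈ Icc 1 (t.1+1), a1 w) ^ (s t))) *
        ((((Nat.factorial c : ℝ) / ∏ q, (Nat.factorial (p q) : ℝ)) *
          (∏ q : Fin νB, ((1/d2)^(νB-1-q.1) / (Nat.factorial (νB-1-q.1) : ℝ) *
              ∑ w ∈ Icc 1 (q.1+1), a2 w) ^ (p q))) *
         ((Real.exp (-(τ*γ+τ-1)/d1) ^ (k-c) * Real.exp (-(τ*γ+τ-1)/d2) ^ c *
            (τ*γ+τ-1) ^ ((∑ t : Fin ηB, (ηB-1-t.1) * s t) + (∑ q : Fin νB, (νB-1-q.1) * p q))) *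
          ((∑ j ∈ Finset.Icc 1 ηE, b1 j * γ ^ (ηE - j) * Real.exp (-γ / e1) /
              (e1 ^ (ηE - j + 1) * (Nat.factorial (ηE - j) : ℝ)))
            + ∑ j ∈ Finset.Icc 1 νE, b2 j * γ ^ (νE - j) * Real.exp (-γ / e2) /
              (e2 ^ (νE - j + 1) * (Nat.factorial (νE - j) : ℝ))))))
    · simp only [mul_sum, sum_mul]
      rw [Finset.sum_comm]
      refine sum_congr rfl fun s _ => ?_
      refine sum_congr rfl fun p _ => ?_
      rw [pow_add (τ*γ+τ-1) (∑ t : Fin ηB, (ηB-1-t.1) * s t) (∑ q : Fin νB, (νB-1-q.1) * p q)]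
      ring
    · refine sum_congr rfl fun s _ => ?_
      rw [mul_sum]
      refine sum_congr rfl fun p _ => ?_
      congr 1
      rw [hEXP, binom_expand τ γ ((∑ t : Fin ηB, (ηB-1-t.1) * s t) + (∑ q : Fin νB, (νB-1-q.1) * p q))]
      simp only [mul_sum, sum_mul]
      refine sum_congr rfl fun b _ => ?_
      simp only [mul_add]
      congr 1
      · simp only [mul_sum, sum_mul]
        refine sum_congr rfl fun j _ => ?_
        rw [show Real.exp (-((τ * ((k-c:ℕ):ℝ)/d1 + τ * (c:ℝ)/d2 + 1/e1) * γ))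
            = Real.exp (-((τ * ((k-c:ℕ):ℝ)/d1 + τ * (c:ℝ)/d2) * γ)) * Real.exp (-γ/e1) by
          rw [← Real.exp_add]; congr 1; ring]
        ring
      · simp only [mul_sum, sum_mul]
        refine sum_congr rfl fun j _ => ?_
        rw [show Real.exp (-((τ * ((k-c:ℕ):ℝ)/d1 + τ * (c:ℝ)/d2 + 1/e2) * γ))
            = Real.exp (-((τ * ((k-c:ℕ):ℝ)/d1 + τ * (c:ℝ)/d2) * γ)) * Real.exp (-γ/e2) by
          rw [← Real.exp_add]; congr 1; ring]
        ring
  · have hBOT : ∀ k c b : ℕ, Integrable (fun γ : ℝ =>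
        (∑ j ∈ Icc 1 ηE, b1 j / (e1^(ηE-j+1) * (Nat.factorial (ηE-j):ℝ)) *
            (γ^(b + (ηE-j)) * Real.exp (-((τ * ((k-c:ℕ):ℝ)/d1 + τ * (c:ℝ)/d2 + 1/e1) * γ))))
          + ∑ j ∈ Icc 1 νE, b2 j / (e2^(νE-j+1) * (Nat.factorial (νE-j):ℝ)) *
            (γ^(b + (νE-j)) * Real.exp (-((τ * ((k-c:ℕ):ℝ)/d1 + τ * (c:ℝ)/d2 + 1/e2) * γ))))
        (volume.restrict (Set.Ioi 0)) := by
      intro k c b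
      refine Integrable.add ?_ ?_
      · exact integrable_finset_sum _ fun j _ =>
          Integrable.const_mul (integrable_aux (b + (ηE-j)) (hα1 k c)) _
      · exact integrable_finset_sum _ fun j _ =>
          Integrable.const_mul (integrable_aux (b + (νE-j)) (hα2 k c)) _
    have hSB : ∀ (k c S : ℕ), Integrable (fun γ : ℝ =>
        ∑ b ∈ range (S + 1), (S.choose b : ℝ) * (τ-1)^(S - b) * τ^b *
          ((∑ j ∈ Icc 1 ηE, b1 j / (e1^(ηE-j+1) * (Nat.factorial (ηE-j):ℝ)) *
              (γ^(b + (ηE-j)) * Real.exp (-((τ * ((k-c:ℕ):ℝ)/d1 + τ * (c:ℝ)/d2 + 1/e1) * γ))))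
            + ∑ j ∈ Icc 1 νE, b2 j / (e2^(νE-j+1) * (Nat.factorial (νE-j):ℝ)) *
              (γ^(b + (νE-j)) * Real.exp (-((τ * ((k-c:ℕ):ℝ)/d1 + τ * (c:ℝ)/d2 + 1/e2) * γ)))))
        (volume.restrict (Set.Ioi 0)) := fun k c S =>
      integrable_finset_sum _ fun b _ => Integrable.const_mul (hBOT k c b) _
    rw [integral_finset_sum _ (fun k _ => Integrable.const_mul
      (integrable_finset_sum _ fun c _ => Integrable.const_mul
        (integrable_finset_sum _ fun s _ => Integrable.const_mul
          (integrable_finset_sum _ fun p _ => Integrable.const_mul (hSB _ _ _) _) _) _) _)]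
    refine sum_congr rfl fun k _ => ?_
    rw [integral_const_mul]
    congr 1
    rw [integral_finset_sum _ (fun c _ => Integrable.const_mul
        (integrable_finset_sum _ fun s _ => Integrable.const_mul
          (integrable_finset_sum _ fun p _ => Integrable.const_mul (hSB _ _ _) _) _) _)]
    refine sum_congr rfl fun c _ => ?_
    rw [integral_const_mul]
    congr 1
    rw [integral_finset_sum _ (fun s _ => Integrable.const_mul
          (integrable_finset_sum _ fun p _ => Integrable.const_mul (hSB _ _ _) _) _)]
    refine sum_congr rfl fun s _ => ?_
    rw [integral_const_mul]
    congr 1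
    rw [integral_finset_sum _ (fun p _ => Integrable.const_mul (hSB _ _ _) _)]
    refine sum_congr rfl fun p _ => ?_
    rw [integral_const_mul]
    congr 1
    rw [integral_finset_sum _ (fun b _ => Integrable.const_mul (hBOT k c b) _)]
    refine sum_congr rfl fun b _ => ?_
    rw [integral_const_mul]
    congr 1
    rw [integral_add
      (integrable_finset_sum _ fun j _ =>
        Integrable.const_mul (integrable_aux (b + (ηE-j)) (hα1 k c)) _)
      (integrable_finset_sum _ fun j _ =>
        Integrable.const_mul (integrable_aux (b + (νE-j)) (hα2 k c)) _),
      integral_finset_sum _ (fun j _ =>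
        Integrable.const_mul (integrable_aux (b + (ηE-j)) (hα1 k c)) _),
      integral_finset_sum _ (fun j _ =>
        Integrable.const_mul (integrable_aux (b + (νE-j)) (hα2 k c)) _)]
    congr 1
    · refine sum_congr rfl fun j _ => ?_
      rw [integral_const_mul, integral_aux _ (hα1 k c),
        show 1 + b + (ηE - j) = (b + (ηE - j)) + 1 by omega]
      ring
    · refine sum_congr rfl fun j _ => ?_
      rw [integral_const_mul, integral_aux _ (hα2 k c),
        show 1 + b + (νE - j) = (b + (νE - j)) + 1 by omega]
      ring

end SOPaux

open Finset in
/-- Proposition 3, case `m_i < μ_i` (Eq. (19)): closed form of the secrecy outage probability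
`∫₀^∞ F_B(τγ + τ − 1) f_E(γ) dγ` for the TAS/MRC MIMO κ-μ shadowed wiretap channel. -/
theorem stmt8 (yB κB yE κE : ℝ) (μB mB NB μE mE NE NA : ℕ) (τ : ℝ)
    (hyB : 0 < yB) (hκB : 0 < κB) (hyE : 0 < yE) (hκE : 0 < κE)
    (hmB : 1 ≤ mB) (hμB : mB < μB) (hmE : 1 ≤ mE) (hμE : mE < μE)
    (hNB : 1 ≤ NB) (hNE : 1 ≤ NE) (hNA : 1 ≤ NA) (hτ : 1 ≤ τ) :
    (∫ γ in Set.Ioi (0 : ℝ),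
        (Fcdf1 (NB * yB) κB (NB * μB) (NB * mB) (τ * γ + τ - 1)) ^ NA *
          fpdf1 (NE * yE) κE (NE * μE) (NE * mE) γ) =
      ∑ k ∈ Finset.range (NA + 1), (-1 : ℝ) ^ k * (Nat.choose NA k : ℝ) *
        ∑ c ∈ Finset.range (k + 1), (Nat.choose k c : ℝ) *
          ∑ s ∈ Finset.Nat.antidiagonalTuple (NB * μB - NB * mB) (k - c),
            ((Nat.factorial (k - c) : ℝ) / ∏ t, (Nat.factorial (s t) : ℝ)) *
            (∏ t : Fin (NB * μB - NB * mB),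
              ((1 / Δ₁ (NB * yB) κB (NB * μB)) ^ (NB * μB - NB * mB - 1 - t.1) /
                  (Nat.factorial (NB * μB - NB * mB - 1 - t.1) : ℝ) *
                ∑ w ∈ Finset.Icc 1 (t.1 + 1), A1 κB (NB * μB) (NB * mB) w) ^ (s t)) *
            ∑ p ∈ Finset.Nat.antidiagonalTuple (NB * mB) c,
              ((Nat.factorial c : ℝ) / ∏ q, (Nat.factorial (p q) : ℝ)) *
              (∏ q : Fin (NB * mB),
                ((1 / Δ₂ (NB * yB) κB (NB * μB) (NB * mB)) ^ (NB * mB - 1 - q.1) /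
                    (Nat.factorial (NB * mB - 1 - q.1) : ℝ) *
                  ∑ w ∈ Finset.Icc 1 (q.1 + 1), A2 κB (NB * μB) (NB * mB) w) ^ (p q)) *
              Real.exp (-(τ - 1) * (((k - c : ℕ) : ℝ) / Δ₁ (NB * yB) κB (NB * μB)
                  + (c : ℝ) / Δ₂ (NB * yB) κB (NB * μB) (NB * mB))) *
              ∑ b ∈ Finset.range (((∑ t : Fin (NB * μB - NB * mB),
                    (NB * μB - NB * mB - 1 - t.1) * s t)
                  + (∑ q : Fin (NB * mB), (NB * mB - 1 - q.1) * p q)) + 1),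
                (Nat.choose ((∑ t : Fin (NB * μB - NB * mB),
                      (NB * μB - NB * mB - 1 - t.1) * s t)
                    + (∑ q : Fin (NB * mB), (NB * mB - 1 - q.1) * p q)) b : ℝ) *
                (τ - 1) ^ (((∑ t : Fin (NB * μB - NB * mB),
                      (NB * μB - NB * mB - 1 - t.1) * s t)
                    + (∑ q : Fin (NB * mB), (NB * mB - 1 - q.1) * p q)) - b) * τ ^ b *
                ((∑ j ∈ Finset.Icc 1 (NE * μE - NE * mE),
                    A1 κE (NE * μE) (NE * mE) j /
                      ((Δ₁ (NE * yE) κE (NE * μE)) ^ (NE * μE - NE * mE - j + 1) *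
                        (Nat.factorial (NE * μE - NE * mE - j) : ℝ)) *
                    (Nat.factorial (b + (NE * μE - NE * mE - j)) : ℝ) /
                    (τ * ((k - c : ℕ) : ℝ) / Δ₁ (NB * yB) κB (NB * μB)
                        + τ * (c : ℝ) / Δ₂ (NB * yB) κB (NB * μB) (NB * mB)
                        + 1 / Δ₁ (NE * yE) κE (NE * μE)) ^
                      (1 + b + (NE * μE - NE * mE - j)))
                  + ∑ j ∈ Finset.Icc 1 (NE * mE),
                    A2 κE (NE * μE) (NE * mE) j /
                      ((Δ₂ (NE * yE) κE (NE * μE) (NE * mE)) ^ (NE * mE - j + 1) *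
                        (Nat.factorial (NE * mE - j) : ℝ)) *
                    (Nat.factorial (b + (NE * mE - j)) : ℝ) /
                    (τ * ((k - c : ℕ) : ℝ) / Δ₁ (NB * yB) κB (NB * μB)
                        + τ * (c : ℝ) / Δ₂ (NB * yB) κB (NB * μB) (NB * mB)
                        + 1 / Δ₂ (NE * yE) κE (NE * μE) (NE * mE)) ^
                      (1 + b + (NE * mE - j))) := by
  
  have hNB' : (0:ℝ) < (NB:ℝ) := by exact_mod_cast hNB
  have hNE' : (0:ℝ) < (NE:ℝ) := by exact_mod_cast hNE
  have hμB' : (0:ℝ) < ((NB*μB : ℕ):ℝ) := by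
    have : 0 < NB*μB := Nat.mul_pos hNB (by omega)
    exact_mod_cast this
  have hmB' : (0:ℝ) < ((NB*mB : ℕ):ℝ) := by
    have : 0 < NB*mB := Nat.mul_pos hNB (by omega)
    exact_mod_cast this
  have hμE' : (0:ℝ) < ((NE*μE : ℕ):ℝ) := by
    have : 0 < NE*μE := Nat.mul_pos hNE (by omega)
    exact_mod_cast this
  have hmE' : (0:ℝ) < ((NE*mE : ℕ):ℝ) := by
    have : 0 < NE*mE := Nat.mul_pos hNE (by omega)
    exact_mod_cast this
  have hd1 : 0 < Δ₁ (NB * yB) κB (NB * μB) :=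
    div_pos (mul_pos hNB' hyB) (mul_pos hμB' (by linarith))
  have hd2 : 0 < Δ₂ (NB * yB) κB (NB * μB) (NB * mB) :=
    div_pos (mul_pos (div_pos (add_pos (mul_pos hμB' hκB) hmB') hmB') (mul_pos hNB' hyB))
      (mul_pos hμB' (by linarith))
  have he1 : 0 < Δ₁ (NE * yE) κE (NE * μE) :=
    div_pos (mul_pos hNE' hyE) (mul_pos hμE' (by linarith))
  have he2 : 0 < Δ₂ (NE * yE) κE (NE * μE) (NE * mE) :=
    div_pos (mul_pos (div_pos (add_pos (mul_pos hμE' hκE) hmE') hmE') (mul_pos hNE' hyE))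
      (mul_pos hμE' (by linarith))
  simp only [Fcdf1, fpdf1]
  exact SOPaux.main (Δ₁ (NB * yB) κB (NB * μB)) (Δ₂ (NB * yB) κB (NB * μB) (NB * mB))
    (Δ₁ (NE * yE) κE (NE * μE)) (Δ₂ (NE * yE) κE (NE * μE) (NE * mE)) hd1 hd2 he1 he2
    (A1 κB (NB * μB) (NB * mB)) (A2 κB (NB * μB) (NB * mB))
    (A1 κE (NE * μE) (NE * mE)) (A2 κE (NE * μE) (NE * mE))
    (NB * μB - NB * mB) (NB * mB) (NE * μE - NE * mE) (NE * mE) NA τ hτ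
end

section
/- Small-argument behavior of the κ-μ shadowed CDF (case m ≥ μ, used in Appendix C): assume m ≥ μ ≥ 1 and let F be the κ-μ shadowed CDF. Then lim_{x→0⁺} F(x)/x^μ = m^m·μ^{μ−1}·(1+κ)^μ/(ḡ^μ·(μκ+m)^m·(μ−1)!). -/
open Filter Finset

private lemma exp_tail (n : ℕ) :
    Tendsto (fun t : ℝ => (Real.exp t - ∑ r ∈ range n, t ^ r / (Nat.factorial r : ℝ)) / t ^ n)
      (nhdsWithin 0 (Set.Ioi 0)) (nhds (1 / (Nat.factorial n : ℝ))) := by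
  set C : ℝ := ((n : ℝ) + 2) / ((Nat.factorial (n + 1) : ℝ) * (n + 1)) with hC
  have key : ∀ᶠ t : ℝ in nhdsWithin 0 (Set.Ioi 0),
      |(Real.exp t - ∑ r ∈ range n, t ^ r / (Nat.factorial r : ℝ)) / t ^ n
        - 1 / (Nat.factorial n : ℝ)| ≤ C * t := by
    filter_upwards [Ioc_mem_nhdsGT_of_mem (Set.left_mem_Ico.mpr one_pos)] with t ht
    obtain ⟨ht0, ht1⟩ := ht
    have htn : (0 : ℝ) < t ^ n := pow_pos ht0 n
    have hfac : (Nat.factorial n : ℝ) ≠ 0 := by positivity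
    have h1 : (Real.exp t - ∑ r ∈ range n, t ^ r / (Nat.factorial r : ℝ)) / t ^ n
        - 1 / (Nat.factorial n : ℝ)
        = (Real.exp t - ∑ r ∈ range (n + 1), t ^ r / (Nat.factorial r : ℝ)) / t ^ n := by
      rw [Finset.sum_range_succ]
      field_simp
      ring
    rw [h1, abs_div, abs_of_pos htn, div_le_iff₀ htn]
    have hb := Real.exp_bound (x := t) (by rw [abs_of_pos ht0]; exact ht1) (Nat.succ_pos n)
    refine hb.trans (le_of_eq ?_)
    rw [abs_of_pos ht0]
    push_cast [hC, Nat.succ_eq_add_one]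
    ring
  have h0 : Tendsto (fun t : ℝ => C * t) (nhdsWithin 0 (Set.Ioi 0)) (nhds 0) := by
    have hc : Continuous fun t : ℝ => C * t := continuous_const.mul continuous_id
    have h := (hc.tendsto 0).mono_left
      (nhdsWithin_le_nhds : nhdsWithin (0 : ℝ) (Set.Ioi 0) ≤ nhds 0)
    simpa using h
  have h2 : Tendsto (fun t : ℝ =>
      (Real.exp t - ∑ r ∈ range n, t ^ r / (Nat.factorial r : ℝ)) / t ^ n
        - 1 / (Nat.factorial n : ℝ)) (nhdsWithin 0 (Set.Ioi 0)) (nhds 0) := by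
    rw [tendsto_zero_iff_abs_tendsto_zero]
    exact squeeze_zero' (Eventually.of_forall fun t => abs_nonneg _) key h0
  have := h2.add_const (1 / (Nat.factorial n : ℝ))
  simpa using this

private lemma G_tendsto (n : ℕ) :
    Tendsto (fun t : ℝ =>
        (1 - Real.exp (-t) * ∑ r ∈ range n, t ^ r / (Nat.factorial r : ℝ)) / t ^ n)
      (nhdsWithin 0 (Set.Ioi 0)) (nhds (1 / (Nat.factorial n : ℝ))) := by
  have heq : ∀ t : ℝ,
      Real.exp (-t) * ((Real.exp t - ∑ r ∈ range n, t ^ r / (Nat.factorial r : ℝ)) / t ^ n)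
        = (1 - Real.exp (-t) * ∑ r ∈ range n, t ^ r / (Nat.factorial r : ℝ)) / t ^ n := by
    intro t
    rw [← mul_div_assoc, mul_sub, ← Real.exp_add]
    simp
  have hexp : Tendsto (fun t : ℝ => Real.exp (-t)) (nhdsWithin 0 (Set.Ioi 0)) (nhds 1) := by
    have h : Tendsto (fun t : ℝ => Real.exp (-t)) (nhds 0) (nhds 1) := by
      simpa [Function.comp_def] using (Real.continuous_exp.comp continuous_neg).tendsto 0
    exact h.mono_left nhdsWithin_le_nhds
  have h := hexp.mul (exp_tail n)
  rw [one_mul] at h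
  exact h.congr heq

/-- Small-argument behavior of the κ-μ shadowed CDF, case `m ≥ μ`:
`F(x)/x^μ → m^m μ^{μ−1} (1+κ)^μ / (ḡ^μ (μκ+m)^m (μ−1)!)` as `x → 0⁻`. -/
theorem stmt10 (g κ : ℝ) (μ m : ℕ) (hg : 0 < g) (hκ : 0 < κ) (hμ : 1 ≤ μ) (hm : μ ≤ m) :
    Filter.Tendsto (fun x : ℝ => Fcdf2 g κ μ m x / x ^ μ)
      (nhdsWithin 0 (Set.Ioi 0))
      (nhds ((m : ℝ) ^ m * (μ : ℝ) ^ (μ - 1) * (1 + κ) ^ μ /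
        (g ^ μ * ((μ : ℝ) * κ + m) ^ m * (Nat.factorial (μ - 1) : ℝ)))) := by
  have hμR : (0 : ℝ) < μ := by exact_mod_cast hμ
  have hmR : (0 : ℝ) < m := by exact_mod_cast hμ.trans hm
  have hκm : (0 : ℝ) < (μ : ℝ) * κ + m := by positivity
  have h1κ : (0 : ℝ) < 1 + κ := by linarith
  set Δ : ℝ := Δ₂ g κ μ m with hΔdef
  have hΔ : 0 < Δ := by
    rw [hΔdef, Δ₂]
    exact div_pos (mul_pos (div_pos hκm hmR) hg) (mul_pos hμR h1κ)
  have hBsum : ∑ j ∈ range (m - μ + 1), Bco κ μ m j = 1 := by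
    have hpq : (m : ℝ) / ((μ : ℝ) * κ + m) + ((μ : ℝ) * κ) / ((μ : ℝ) * κ + m) = 1 := by
      field_simp
      ring
    calc ∑ j ∈ range (m - μ + 1), Bco κ μ m j
        = ∑ j ∈ range (m - μ + 1),
            ((m : ℝ) / ((μ : ℝ) * κ + m)) ^ j * (((μ : ℝ) * κ) / ((μ : ℝ) * κ + m)) ^ (m - μ - j)
              * (Nat.choose (m - μ) j : ℝ) := by
          refine Finset.sum_congr rfl fun j _ => ?_
          rw [Bco]; ring
      _ = ((m : ℝ) / ((μ : ℝ) * κ + m) + ((μ : ℝ) * κ) / ((μ : ℝ) * κ + m)) ^ (m - μ) :=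
          (add_pow _ _ _).symm
      _ = 1 := by rw [hpq, one_pow]
  have hF : ∀ x : ℝ, Fcdf2 g κ μ m x / x ^ μ =
      ∑ j ∈ range (m - μ + 1), Bco κ μ m j *
        ((1 - Real.exp (-(x / Δ)) * ∑ r ∈ range (m - j), (x / Δ) ^ r / (Nat.factorial r : ℝ))
          / x ^ μ) := by
    intro x
    rw [Fcdf2, ← hΔdef]
    have hsplit : (1 : ℝ) - ∑ j ∈ range (m - μ + 1), Bco κ μ m j * Real.exp (-x / Δ) *
          ∑ r ∈ range (m - j), (x / Δ) ^ r / (Nat.factorial r : ℝ)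
        = ∑ j ∈ range (m - μ + 1), Bco κ μ m j *
            (1 - Real.exp (-(x / Δ)) * ∑ r ∈ range (m - j), (x / Δ) ^ r / (Nat.factorial r : ℝ)) := by
      rw [eq_comm]
      calc ∑ j ∈ range (m - μ + 1), Bco κ μ m j *
            (1 - Real.exp (-(x / Δ)) * ∑ r ∈ range (m - j), (x / Δ) ^ r / (Nat.factorial r : ℝ))
          = ∑ j ∈ range (m - μ + 1), (Bco κ μ m j - Bco κ μ m j * Real.exp (-x / Δ) *
              ∑ r ∈ range (m - j), (x / Δ) ^ r / (Nat.factorial r : ℝ)) := by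
            refine Finset.sum_congr rfl fun j _ => ?_
            rw [neg_div]; ring
        _ = _ := by rw [Finset.sum_sub_distrib, hBsum]
    rw [hsplit, Finset.sum_div]
    exact Finset.sum_congr rfl fun j _ => (mul_div_assoc _ _ _)
  have hterm : ∀ j ∈ range (m - μ + 1),
      Tendsto (fun x : ℝ => Bco κ μ m j *
          ((1 - Real.exp (-(x / Δ)) * ∑ r ∈ range (m - j), (x / Δ) ^ r / (Nat.factorial r : ℝ))
            / x ^ μ))
        (nhdsWithin 0 (Set.Ioi 0))
        (nhds (Bco κ μ m j * ((1 / Δ) ^ μ *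
          ((0 : ℝ) ^ (m - j - μ) * (1 / (Nat.factorial (m - j) : ℝ)))))) := by
    intro j hj
    rw [Finset.mem_range] at hj
    have hn : μ ≤ m - j := by omega
    have htendst : Tendsto (fun x : ℝ => x / Δ) (nhdsWithin 0 (Set.Ioi 0))
        (nhdsWithin 0 (Set.Ioi 0)) := by
      apply tendsto_nhdsWithin_of_tendsto_nhds_of_eventually_within
      · have hc : Continuous fun x : ℝ => x / Δ := continuous_id.div_const Δ
        have h := (hc.tendsto 0).mono_left
          (nhdsWithin_le_nhds : nhdsWithin (0 : ℝ) (Set.Ioi 0) ≤ nhds 0)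
        simpa using h
      · filter_upwards [self_mem_nhdsWithin] with x hx
        exact div_pos hx hΔ
    have hpow : Tendsto (fun t : ℝ => t ^ (m - j - μ)) (nhdsWithin 0 (Set.Ioi 0))
        (nhds ((0 : ℝ) ^ (m - j - μ))) :=
      ((continuous_pow _).tendsto 0).mono_left nhdsWithin_le_nhds
    have hmain := (hpow.mul (G_tendsto (m - j))).comp htendst
    have hfin := hmain.const_mul ((1 / Δ) ^ μ)
    refine Tendsto.const_mul _ ?_
    refine Tendsto.congr' ?_ hfin
    filter_upwards [self_mem_nhdsWithin] with x hx
    have hx0 : x ≠ 0 := ne_of_gt hx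
    have ht0 : x / Δ ≠ 0 := (div_pos hx hΔ).ne'
    have hsp : (x / Δ) ^ (m - j) = (x / Δ) ^ (m - j - μ) * (x / Δ) ^ μ := by
      rw [← pow_add]
      congr 1
      omega
    simp only [Function.comp]
    rw [hsp]
    field_simp
    ring
  have hsum := tendsto_finset_sum (range (m - μ + 1)) hterm
  have hLsum : ∑ j ∈ range (m - μ + 1), Bco κ μ m j * ((1 / Δ) ^ μ *
        ((0 : ℝ) ^ (m - j - μ) * (1 / (Nat.factorial (m - j) : ℝ))))
      = (m : ℝ) ^ m * (μ : ℝ) ^ (μ - 1) * (1 + κ) ^ μ /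
        (g ^ μ * ((μ : ℝ) * κ + m) ^ m * (Nat.factorial (μ - 1) : ℝ)) := by
    rw [Finset.sum_eq_single (m - μ)]
    · have h0 : m - (m - μ) = μ := by omega
      have h00 : m - (m - μ) - μ = 0 := by omega
      have hchoose : (Nat.choose (m - μ) (m - μ) : ℝ) = 1 := by simp
      have hq0 : m - μ - (m - μ) = 0 := by omega
      rw [Bco, h00, h0, hq0, hchoose]
      have hΔinv : (1 : ℝ) / Δ = (m : ℝ) * μ * (1 + κ) / (((μ : ℝ) * κ + m) * g) := by
        rw [hΔdef, Δ₂]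
        field_simp
      rw [hΔinv, pow_zero]
      have hfμ : (Nat.factorial μ : ℝ) = (μ : ℝ) * (Nat.factorial (μ - 1) : ℝ) := by
        rw [← Nat.mul_factorial_pred (Nat.one_le_iff_ne_zero.mp hμ)]; push_cast; ring
      have hfν0 : (Nat.factorial (μ - 1) : ℝ) ≠ 0 := by positivity
      have ha : ((m : ℝ)) ^ (m - μ) * ((m : ℝ)) ^ μ = ((m : ℝ)) ^ m := pow_sub_mul_pow _ hm
      have hb : ((μ : ℝ) * κ + m) ^ (m - μ) * ((μ : ℝ) * κ + m) ^ μ = ((μ : ℝ) * κ + m) ^ m :=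
        pow_sub_mul_pow _ hm
      have hu : ((μ : ℝ)) ^ (μ - 1) * (μ : ℝ) = ((μ : ℝ)) ^ μ := by
        have h := pow_sub_mul_pow ((μ : ℝ)) hμ
        simpa using h
      rw [hfμ, div_pow, div_pow, mul_pow, mul_pow, mul_pow]
      have hbM : ((μ : ℝ) * κ + m) ^ (m - μ) ≠ 0 := by positivity
      have hbμ : ((μ : ℝ) * κ + m) ^ μ ≠ 0 := by positivity
      have hgμ : g ^ μ ≠ 0 := by positivity
      field_simp
      rw [← ha, ← hb, ← hu]
      ring
    · intro j hj hne
      rw [Finset.mem_range] at hj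
      have hp : m - j - μ ≠ 0 := by omega
      rw [zero_pow hp]
      ring
    · intro h
      exact absurd (Finset.self_mem_range_succ (m - μ)) h
  rw [← hLsum]
  exact hsum.congr fun x => (hF x).symm
end

section
/- Laplace-type integral of the confluent hypergeometric function (the identity used to evaluate I₄ in Appendix C): for real a > 0, b > 0, s > 0 and 0 ≤ k < c, ∫₀^∞ e^{−ct}·t^{s−1}·₁F₁(a; b; kt) dt = Γ(s)·c^{−s}·₂F₁(a, s; b; k/c). -/
open MeasureTheory

/-- The confluent hypergeometric function `₁F₁(a; b; z)`. -/
noncomputable def oneF1 (a b z : ℝ) : ℝ :=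
  ∑' n : ℕ, (ascPochhammer ℝ n).eval a * z ^ n /
    ((ascPochhammer ℝ n).eval b * (Nat.factorial n : ℝ))

/-- The Gauss hypergeometric function `₂F₁(a₁, a₂; b; z)`. -/
noncomputable def twoF1 (a₁ a₂ b z : ℝ) : ℝ :=
  ∑' n : ℕ, (ascPochhammer ℝ n).eval a₁ * (ascPochhammer ℝ n).eval a₂ * z ^ n /
    ((ascPochhammer ℝ n).eval b * (Nat.factorial n : ℝ))

open Real Set

private lemma gamma_add_nat' {s : ℝ} (hs : 0 < s) (n : ℕ) :
    Real.Gamma (s + n) = Real.Gamma s * (ascPochhammer ℝ n).eval s := by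
  induction n with
  | zero => simp
  | succ n ih =>
    have h1 : s + (n + 1 : ℕ) = (s + n) + 1 := by push_cast; ring
    have h2 : (0:ℝ) < s + n := by positivity
    rw [h1, Real.Gamma_add_one h2.ne', ih, ascPochhammer_succ_eval]
    ring

private lemma summable_2F1' {a s b x : ℝ} (ha : 0 < a) (hs : 0 < s) (hb : 0 < b)
    (hx0 : 0 ≤ x) (hx : |x| < 1) :
    Summable fun n : ℕ => (ascPochhammer ℝ n).eval a * (ascPochhammer ℝ n).eval s * x ^ n /
      ((ascPochhammer ℝ n).eval b * (Nat.factorial n : ℝ)) := by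
  have hrad : (ordinaryHypergeometricSeries ℝ a s b).radius = 1 := by
    apply ordinaryHypergeometricSeries_radius_eq_one
    intro kn
    refine ⟨?_, ?_, ?_⟩ <;> intro h <;> nlinarith [Nat.cast_nonneg (α := ℝ) kn]
  have hmem : x ∈ Metric.eball (0:ℝ) (ordinaryHypergeometricSeries ℝ a s b).radius := by
    rw [hrad, Metric.mem_eball, edist_zero_right, enorm_eq_nnnorm, ← ENNReal.coe_one, ENNReal.coe_lt_coe,
      ← NNReal.coe_lt_coe]
    simpa [Real.norm_eq_abs] using hx
  have hsum := (ordinaryHypergeometricSeries ℝ a s b).summable_norm_apply hmem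
  apply hsum.abs.congr
  intro n
  rw [ordinaryHypergeometricSeries_apply_eq]
  have hpa := ascPochhammer_pos n a ha
  have hps := ascPochhammer_pos n s hs
  have hpb := ascPochhammer_pos n b hb
  have hf : (0:ℝ) < (Nat.factorial n : ℝ) := by positivity
  rw [smul_eq_mul, Real.norm_eq_abs, abs_abs, abs_of_nonneg (by positivity)]
  rw [div_eq_mul_inv, mul_inv]
  ring

private lemma laplace_monomial' {s c : ℝ} (hs : 0 < s) (hc : 0 < c) (n : ℕ) :
    ∫ t in Ioi (0:ℝ), Real.exp (-(c * t)) * t ^ (s - 1) * t ^ n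
      = Real.Gamma s * (ascPochhammer ℝ n).eval s * c ^ (-s) * (c ^ n)⁻¹ := by
  have h1 : ∀ t ∈ Ioi (0:ℝ), Real.exp (-(c*t)) * t ^ (s-1) * t ^ n
      = t ^ ((s + n) - 1) * Real.exp (-(c*t)) := by
    intro t ht
    rw [show (s + n) - 1 = (s - 1) + (n:ℝ) by ring, Real.rpow_add ht, Real.rpow_natCast]
    ring
  rw [setIntegral_congr_fun measurableSet_Ioi h1,
    integral_rpow_mul_exp_neg_mul_Ioi (by positivity) hc, one_div, Real.inv_rpow hc.le,
    Real.rpow_add hc, Real.rpow_natCast, Real.rpow_neg hc.le, gamma_add_nat' hs n, mul_inv]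
  ring

private lemma laplace_monomial_integrable' {s c : ℝ} (hs : 0 < s) (hc : 0 < c) (n : ℕ) :
    IntegrableOn (fun t => Real.exp (-(c * t)) * t ^ (s - 1) * t ^ n) (Ioi (0:ℝ)) := by
  have h := integrableOn_rpow_mul_exp_neg_mul_rpow (p := 1) (s := s + n - 1) (b := c)
    (by linarith [Nat.cast_nonneg (α := ℝ) n]) one_pos hc
  apply h.congr_fun _ measurableSet_Ioi
  intro t ht
  simp only
  rw [Real.rpow_one, show s + (n:ℝ) - 1 = (s - 1) + (n:ℝ) by ring, Real.rpow_add ht,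
    Real.rpow_natCast, neg_mul]
  ring

/-- Laplace-type integral of the confluent hypergeometric function (identity used to evaluate
`I₄` in Appendix C): for `a > 0`, `b > 0`, `s > 0` and `0 ≤ k < c`,
`∫₀^∞ e^{−ct} t^{s−1} ₁F₁(a; b; kt) dt = Γ(s) c^{−s} ₂F₁(a, s; b; k/c)`. -/
theorem stmt12 (a b s c k : ℝ) (ha : 0 < a) (hb : 0 < b) (hs : 0 < s)
    (hk : 0 ≤ k) (hkc : k < c) :
    ∫ t in Set.Ioi (0 : ℝ), Real.exp (-c * t) * t ^ (s - 1) * oneF1 a b (k * t) =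
      Real.Gamma s * c ^ (-s) * twoF1 a s b (k / c) := by
  have hc : 0 < c := lt_of_le_of_lt hk hkc
  set P : ℕ → ℝ → ℝ := fun n y => (ascPochhammer ℝ n).eval y with hP
  have hx0 : (0:ℝ) ≤ k / c := by positivity
  have hx1 : k / c < 1 := (div_lt_one hc).mpr hkc
  set F : ℕ → ℝ → ℝ := fun n t =>
    (P n a * k ^ n / (P n b * (Nat.factorial n : ℝ))) *
      (Real.exp (-(c * t)) * t ^ (s - 1) * t ^ n) with hF
  have hpa : ∀ n, 0 < P n a := fun n => ascPochhammer_pos n a ha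
  have hps : ∀ n, 0 < P n s := fun n => ascPochhammer_pos n s hs
  have hpb : ∀ n, 0 < P n b := fun n => ascPochhammer_pos n b hb
  have hfac : ∀ n : ℕ, (0:ℝ) < (Nat.factorial n : ℝ) := fun n => by positivity
  -- pointwise identity between the integrand and the termwise series
  have hA : ∀ t : ℝ, Real.exp (-c * t) * t ^ (s - 1) * oneF1 a b (k * t) = ∑' n, F n t := by
    intro t
    rw [oneF1, ← tsum_mul_left]
    refine tsum_congr fun n => ?_
    simp only [hF, neg_mul, mul_pow, div_eq_mul_inv, mul_inv]
    ring
  -- value of each term integral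
  have key : ∀ n : ℕ, ∫ t in Ioi (0:ℝ), F n t
      = Real.Gamma s * c ^ (-s) *
        (P n a * P n s * (k / c) ^ n / (P n b * (Nat.factorial n : ℝ))) := by
    intro n
    rw [hF]
    rw [integral_const_mul, laplace_monomial' hs hc n]
    have hcn : (0:ℝ) < c ^ n := by positivity
    rw [div_pow]
    field_simp
    ring
  -- integrability of each term
  have hInt : ∀ n : ℕ, IntegrableOn (F n) (Ioi (0:ℝ)) := fun n =>
    (laplace_monomial_integrable' hs hc n).const_mul _
  -- nonnegativity on `Ioi 0`, so norms can be dropped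
  have hnorm : ∀ n : ℕ, (∫ t in Ioi (0:ℝ), ‖F n t‖) = ∫ t in Ioi (0:ℝ), F n t := by
    intro n
    refine setIntegral_congr_fun measurableSet_Ioi fun t ht => ?_
    refine Real.norm_of_nonneg ?_
    have h1 : (0:ℝ) ≤ P n a * k ^ n / (P n b * (Nat.factorial n : ℝ)) := by
      have := hpa n; have := hpb n; have := hfac n; positivity
    have h2 : (0:ℝ) ≤ Real.exp (-(c*t)) * t ^ (s-1) * t ^ n :=
      mul_nonneg (mul_nonneg (Real.exp_nonneg _) (Real.rpow_nonneg (le_of_lt ht) _))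
        (pow_nonneg (le_of_lt ht) _)
    exact mul_nonneg h1 h2
  -- summability of the integrals of norms
  have hxabs : |k / c| < 1 := by rwa [abs_of_nonneg hx0]
  have hsum2 := summable_2F1' ha hs hb hx0 hxabs
  have hSum : Summable fun n : ℕ => ∫ t in Ioi (0:ℝ), ‖F n t‖ := by
    apply ((hsum2.mul_left (Real.Gamma s * c ^ (-s))).congr (fun n => ?_))
    rw [hnorm n, key n]
  calc ∫ t in Ioi (0:ℝ), Real.exp (-c * t) * t ^ (s - 1) * oneF1 a b (k * t)
      = ∫ t in Ioi (0:ℝ), ∑' n, F n t := by simp_rw [hA]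
    _ = ∑' n, ∫ t in Ioi (0:ℝ), F n t :=
        (integral_tsum_of_summable_integral_norm hInt hSum).symm
    _ = ∑' n, Real.Gamma s * c ^ (-s) *
          (P n a * P n s * (k / c) ^ n / (P n b * (Nat.factorial n : ℝ))) :=
        tsum_congr key
    _ = Real.Gamma s * c ^ (-s) * twoF1 a s b (k / c) := by
        rw [tsum_mul_left, twoF1]
end

section
/- Closed-form average capacity of a κ-μ shadowed channel, case m < μ (evaluation of C̄_E in Appendix E, Eq. (E.1)): assume μ > m ≥ 1 and let F be the κ-μ shadowed CDF. Then (1/ln 2)·∫₀^∞ (1 − F(γ))/(1+γ) dγ = (1/ln 2)·( e^{1/Δ₁}·Σ_{j=1}^{μ−m} A₁ⱼ·Σ_{r=0}^{μ−m−j} (1/Δ₁)^r·Γᵤ(−r, 1/Δ₁) + e^{1/Δ₂}·Σ_{j=1}^{m} A₂ⱼ·Σ_{r=0}^{m−j} (1/Δ₂)^r·Γᵤ(−r, 1/Δ₂) ). -/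
open MeasureTheory in
/-- The (generalized) upper incomplete gamma function `Γᵤ(a, x) = ∫_x^∞ t^{a−1} e^{−t} dt`,
convergent for every real `a` when `x > 0`. -/
noncomputable def Gammau (a x : ℝ) : ℝ := ∫ t in Set.Ioi x, t ^ (a - 1) * Real.exp (-t)

section Helpers

open MeasureTheory Set Filter Topology Asymptotics Real

private lemma tendsto_pow_exp (n : ℕ) {b : ℝ} (hb : 0 < b) :
    Tendsto (fun x : ℝ => x ^ n * Real.exp (-b * x)) atTop (𝓝 0) :=
  (tendsto_rpow_mul_exp_neg_mul_atTop_nhds_zero n b hb).congr' (by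
    filter_upwards [eventually_gt_atTop (0:ℝ)] with x hx
    rw [Real.rpow_natCast])

private lemma bigO_exp {f : ℝ → ℝ} {b : ℝ}
    (h : Tendsto (fun x => f x * Real.exp (b * x)) atTop (𝓝 0)) :
    f =O[atTop] fun x => Real.exp (-b * x) := by
  rw [Asymptotics.isBigO_iff]
  refine ⟨1, ?_⟩
  have h3 := h.abs
  rw [abs_zero] at h3
  filter_upwards [h3.eventually_lt_const zero_lt_one] with x hx
  rw [abs_mul, abs_of_pos (Real.exp_pos _)] at hx
  rw [Real.norm_eq_abs, Real.norm_eq_abs, abs_of_pos (Real.exp_pos _), one_mul,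
    neg_mul, Real.exp_neg, ← one_div]
  exact (le_div_iff₀ (Real.exp_pos _)).mpr hx.le

private lemma integrableOn_of_exp {f : ℝ → ℝ} {a b : ℝ} (hb : 0 < b)
    (hc : ContinuousOn f (Set.Ici a))
    (h : Tendsto (fun x => f x * Real.exp (b * x)) atTop (𝓝 0)) :
    IntegrableOn f (Set.Ioi a) :=
  integrable_of_isBigO_exp_neg hb hc (bigO_exp h)

private lemma tendsto_shift (a : ℝ) (ha : 0 ≤ a) (r : ℕ) {b : ℝ} (hb : 0 < b) :
    Tendsto (fun x : ℝ => (x - a) ^ r * Real.exp (-b * x)) atTop (𝓝 0) := by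
  apply squeeze_zero_norm' ?_ (tendsto_pow_exp r hb)
  filter_upwards [eventually_ge_atTop a] with x hx
  have h0 : (0:ℝ) ≤ x - a := sub_nonneg.2 hx
  rw [Real.norm_eq_abs, abs_mul, abs_pow, abs_of_nonneg h0, abs_of_pos (Real.exp_pos _)]
  exact mul_le_mul_of_nonneg_right
    (pow_le_pow_left₀ h0 (by linarith) r) (Real.exp_pos _).le

private lemma tendsto_shift_div (a : ℝ) (ha : 0 ≤ a) (r : ℕ) {b : ℝ} (hb : 0 < b) :
    Tendsto (fun x : ℝ => (x - a) ^ r * Real.exp (-b * x) / x) atTop (𝓝 0) := by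
  apply squeeze_zero_norm' ?_ (tendsto_shift a ha r hb)
  filter_upwards [eventually_ge_atTop a, eventually_ge_atTop 1] with x hx hx1
  have h0 : (0:ℝ) ≤ (x - a) ^ r * Real.exp (-b * x) :=
    mul_nonneg (pow_nonneg (sub_nonneg.2 hx) r) (Real.exp_pos _).le
  rw [Real.norm_eq_abs, abs_div, abs_of_nonneg h0, abs_of_pos (by linarith : (0:ℝ) < x)]
  exact div_le_self h0 hx1

private lemma intOn_shift (a : ℝ) (ha : 0 < a) (r : ℕ) :
    IntegrableOn (fun u : ℝ => (u - a) ^ r * Real.exp (-u)) (Set.Ioi a) := by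
  apply integrableOn_of_exp (b := 1/2) (by norm_num)
  · exact (((continuous_id.sub continuous_const).pow r).mul
      (Real.continuous_exp.comp continuous_neg)).continuousOn
  · apply (tendsto_shift a ha.le r (by norm_num : (0:ℝ) < 1/2)).congr
    intro x
    rw [mul_assoc, ← Real.exp_add]
    ring_nf

private lemma intOn_shift_div (a : ℝ) (ha : 0 < a) (r : ℕ) :
    IntegrableOn (fun u : ℝ => (u - a) ^ r * Real.exp (-u) / u) (Set.Ioi a) := by
  apply integrableOn_of_exp (b := 1/2) (by norm_num)
  · apply ContinuousOn.div
    · exact (((continuous_id.sub continuous_const).pow r).mul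
        (Real.continuous_exp.comp continuous_neg)).continuousOn
    · exact continuousOn_id
    · intro x hx; exact (ha.trans_le hx).ne'
  · apply (tendsto_shift_div a ha.le r (by norm_num : (0:ℝ) < 1/2)).congr
    intro x
    rw [div_mul_eq_mul_div, mul_assoc, ← Real.exp_add]
    ring_nf

private lemma intOn_rpow (a : ℝ) (ha : 0 < a) (c : ℝ) :
    IntegrableOn (fun t : ℝ => t ^ c * Real.exp (-t)) (Set.Ioi a) := by
  apply integrableOn_of_exp (b := 1/2) (by norm_num)
  · exact (continuousOn_id.rpow_const fun x hx => Or.inl (ha.trans_le hx).ne').mul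
      (Real.continuous_exp.comp continuous_neg).continuousOn
  · apply (tendsto_rpow_mul_exp_neg_mul_atTop_nhds_zero c (1/2) (by norm_num)).congr
    intro x
    rw [mul_assoc, ← Real.exp_add]
    ring_nf

private lemma integral_shift_pow (a : ℝ) (ha : 0 < a) (r : ℕ) :
    ∫ u in Set.Ioi a, (u - a) ^ r * Real.exp (-u) = r.factorial * Real.exp (-a) := by
  induction r with
  | zero => simp [integral_exp_neg_Ioi, integral_exp_Iic]
  | succ r ih =>
    have hder : ∀ u ∈ Set.Ici a, HasDerivAt (fun u : ℝ => -((u - a) ^ (r+1) * Real.exp (-u)))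
        ((u - a) ^ (r+1) * Real.exp (-u) - ((r:ℝ)+1) * ((u - a) ^ r * Real.exp (-u))) u := by
      intro u _
      have h1 : HasDerivAt (fun u : ℝ => (u - a) ^ (r+1)) (((r:ℝ)+1) * (u - a) ^ r) u := by
        have := ((hasDerivAt_id u).sub_const a).fun_pow (r+1)
        simpa using this
      have h2 : HasDerivAt (fun u : ℝ => Real.exp (-u)) (-Real.exp (-u)) u := by
        simpa using (hasDerivAt_neg u).exp
      have h3 := (h1.fun_mul h2).fun_neg
      refine h3.congr_deriv ?_
      ring
    have hint : IntegrableOn (fun u : ℝ =>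
        (u - a) ^ (r+1) * Real.exp (-u) - ((r:ℝ)+1) * ((u - a) ^ r * Real.exp (-u)))
        (Set.Ioi a) :=
      (intOn_shift a ha (r+1)).sub ((intOn_shift a ha r).const_mul _)
    have hlim : Tendsto (fun u : ℝ => -((u - a) ^ (r+1) * Real.exp (-u))) atTop (𝓝 0) := by
      have h4 := (tendsto_shift a ha.le (r+1) one_pos).neg
      rw [neg_zero] at h4
      apply h4.congr
      intro x
      ring_nf
    have key := integral_Ioi_of_hasDerivAt_of_tendsto' hder hint hlim
    rw [integral_sub (intOn_shift a ha (r+1)) ((intOn_shift a ha r).const_mul _),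
        integral_const_mul, ih] at key
    rw [sub_self, zero_pow (by omega : r + 1 ≠ 0), zero_mul, neg_zero, sub_zero] at key
    rw [Nat.factorial_succ]
    push_cast
    linarith [key]

private lemma gammau_step (a : ℝ) (ha : 0 < a) (n : ℕ) :
    ((n:ℝ)+1) * Gammau (-((n:ℝ)+1)) a + Gammau (-(n:ℝ)) a
      = a ^ (-((n:ℝ)+1)) * Real.exp (-a) := by
  have hder : ∀ t ∈ Set.Ici a, HasDerivAt (fun t : ℝ => -(t ^ (-((n:ℝ)+1)) * Real.exp (-t)))
      (((n:ℝ)+1) * (t ^ (-((n:ℝ)+1) - 1) * Real.exp (-t)) + t ^ (-(n:ℝ) - 1) * Real.exp (-t)) t := by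
    intro t ht
    have ht0 : t ≠ 0 := (ha.trans_le ht).ne'
    have h1 : HasDerivAt (fun t : ℝ => t ^ (-((n:ℝ)+1)))
        ((-((n:ℝ)+1)) * t ^ (-((n:ℝ)+1) - 1)) t :=
      Real.hasDerivAt_rpow_const (Or.inl ht0)
    have h2 : HasDerivAt (fun t : ℝ => Real.exp (-t)) (-Real.exp (-t)) t := by
      simpa using (hasDerivAt_neg t).exp
    have h3 := (h1.fun_mul h2).fun_neg
    have hpq : t ^ (-(n:ℝ) - 1) = t ^ (-((n:ℝ)+1)) := by
      rw [show -(n:ℝ) - 1 = -((n:ℝ)+1) by ring]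
    refine h3.congr_deriv ?_
    rw [hpq]
    ring
  have hint : IntegrableOn (fun t : ℝ =>
      ((n:ℝ)+1) * (t ^ (-((n:ℝ)+1) - 1) * Real.exp (-t)) + t ^ (-(n:ℝ) - 1) * Real.exp (-t))
      (Set.Ioi a) :=
    ((intOn_rpow a ha _).const_mul _).add (intOn_rpow a ha _)
  have hlim : Tendsto (fun t : ℝ => -(t ^ (-((n:ℝ)+1)) * Real.exp (-t))) atTop (𝓝 0) := by
    have h4 := (tendsto_rpow_mul_exp_neg_mul_atTop_nhds_zero (-((n:ℝ)+1)) 1 one_pos).neg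
    rw [neg_zero] at h4
    apply h4.congr
    intro x
    ring_nf
  have key := integral_Ioi_of_hasDerivAt_of_tendsto' hder hint hlim
  rw [integral_add ((intOn_rpow a ha _).const_mul _) (intOn_rpow a ha _),
      integral_const_mul] at key
  simp only [zero_sub, neg_neg] at key
  rw [Gammau, Gammau]
  linarith [key]

private lemma integral_main (a : ℝ) (ha : 0 < a) (r : ℕ) :
    ∫ u in Set.Ioi a, (u - a) ^ r * Real.exp (-u) / u
      = r.factorial * a ^ r * Gammau (-(r:ℝ)) a := by
  induction r with
  | zero =>
    simp only [pow_zero, one_mul, Nat.factorial_zero, Nat.cast_one, Nat.cast_zero, neg_zero]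
    rw [Gammau]
    apply setIntegral_congr_fun measurableSet_Ioi
    intro t ht
    have ht0 : (0:ℝ) < t := ha.trans ht
    simp only [zero_sub, Real.rpow_neg_one]
    field_simp
  | succ r ih =>
    have hsplit : ∀ u ∈ Set.Ioi a, (u - a) ^ (r+1) * Real.exp (-u) / u
        = (u - a) ^ r * Real.exp (-u) - a * ((u - a) ^ r * Real.exp (-u) / u) := by
      intro u hu
      have hu0 : u ≠ 0 := (ha.trans hu).ne'
      field_simp
      ring
    rw [setIntegral_congr_fun measurableSet_Ioi hsplit,
        integral_sub (intOn_shift a ha r) ((intOn_shift_div a ha r).const_mul a),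
        integral_const_mul, integral_shift_pow a ha r, ih]
    have hg := gammau_step a ha r
    have hcast : -(((r:ℕ)+1:ℕ):ℝ) = -((r:ℝ)+1) := by push_cast; ring
    rw [hcast]
    have hpow : (a:ℝ) ^ (r+1) * a ^ (-((r:ℝ)+1)) = 1 := by
      rw [← Real.rpow_natCast a (r+1), ← Real.rpow_add ha]
      rw [show ((r+1:ℕ):ℝ) + -((r:ℝ)+1) = 0 by push_cast; ring]
      exact Real.rpow_zero a
    rw [Nat.factorial_succ]
    push_cast
    linear_combination -(r.factorial:ℝ) * a ^ (r+1) * hg -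
      (r.factorial:ℝ) * Real.exp (-a) * hpow

private lemma integral_Ioi_add_right (f : ℝ → ℝ) (c d : ℝ) :
    ∫ x in Set.Ioi c, f (x + d) = ∫ y in Set.Ioi (c + d), f y := by
  rw [← integral_indicator measurableSet_Ioi, ← integral_indicator measurableSet_Ioi,
      ← integral_add_right_eq_self (fun x => (Set.Ioi (c+d)).indicator f x) d]
  congr 1
  ext x
  by_cases hx : c < x
  · rw [Set.indicator_of_mem (Set.mem_Ioi.mpr hx),
        Set.indicator_of_mem (by simp only [Set.mem_Ioi]; linarith : x + d ∈ Set.Ioi (c+d))]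
  · have hx' : x ≤ c := not_lt.mp hx
    rw [Set.indicator_of_notMem (by simpa using hx),
        Set.indicator_of_notMem (by simp only [Set.mem_Ioi, not_lt]; linarith)]

private lemma subst_lemma (Δ : ℝ) (hΔ : 0 < Δ) (r : ℕ) :
    ∫ γ in Set.Ioi (0:ℝ), (γ/Δ)^r * Real.exp (-γ/Δ) / (1+γ)
      = Real.exp (1/Δ) * ∫ u in Set.Ioi (1/Δ), (u - 1/Δ)^r * Real.exp (-u) / u := by
  set G : ℝ → ℝ := fun y => ((y-1)/Δ)^r * Real.exp (-(y-1)/Δ) / y with hG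
  have h1 : ∫ γ in Set.Ioi (0:ℝ), (γ/Δ)^r * Real.exp (-γ/Δ) / (1+γ)
      = ∫ y in Set.Ioi (1:ℝ), G y := by
    have ht := integral_Ioi_add_right G 0 1
    rw [zero_add] at ht
    rw [← ht]
    apply setIntegral_congr_fun measurableSet_Ioi
    intro γ _
    simp only [hG, add_sub_cancel_right]
    rw [add_comm 1 γ]
  have h2 : ∫ y in Set.Ioi (1:ℝ), G y = Δ * ∫ u in Set.Ioi (1/Δ), G (Δ * u) := by
    have h := integral_comp_mul_left_Ioi G (1/Δ) hΔ
    rw [show Δ * (1/Δ) = 1 by field_simp] at h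
    rw [h, smul_eq_mul, ← mul_assoc, mul_inv_cancel₀ hΔ.ne', one_mul]
  have h3 : Δ * ∫ u in Set.Ioi (1/Δ), G (Δ * u)
      = Real.exp (1/Δ) * ∫ u in Set.Ioi (1/Δ), (u - 1/Δ)^r * Real.exp (-u) / u := by
    rw [← integral_const_mul, ← integral_const_mul]
    apply setIntegral_congr_fun measurableSet_Ioi
    intro u hu
    have ha : (0:ℝ) < 1/Δ := by positivity
    have hu0 : (0:ℝ) < u := ha.trans hu
    simp only [hG]
    have e1 : (Δ * u - 1)/Δ = u - 1/Δ := by field_simp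
    have e2 : -(Δ * u - 1)/Δ = 1/Δ + -u := by field_simp; ring
    rw [e1, e2, Real.exp_add]
    field_simp
  rw [h1, h2, h3]

private lemma IB (Δ : ℝ) (hΔ : 0 < Δ) (r : ℕ) :
    IntegrableOn (fun γ : ℝ => (γ/Δ)^r * Real.exp (-γ/Δ) / (1+γ)) (Set.Ioi 0) := by
  apply integrableOn_of_exp (b := 1/(2*Δ)) (by positivity)
  · apply ContinuousOn.div
    · exact (((continuous_id.div_const Δ).pow r).mul
        (Real.continuous_exp.comp (continuous_neg.div_const Δ))).continuousOn
    · exact (continuous_const.add continuous_id).continuousOn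
    · intro x hx
      have : (0:ℝ) ≤ x := hx
      positivity
  · have h5 : Filter.Tendsto (fun γ : ℝ => (1/Δ)^r * (γ^r * Real.exp (-(1/(2*Δ)) * γ)))
        Filter.atTop (nhds 0) := by
      have h6 := (tendsto_pow_exp r (show (0:ℝ) < 1/(2*Δ) by positivity)).const_mul ((1/Δ)^r)
      rw [mul_zero] at h6
      exact h6
    refine squeeze_zero_norm' ?_ h5
    · filter_upwards [eventually_ge_atTop (0:ℝ)] with γ hγ
      have h1γ : (0:ℝ) < 1 + γ := by linarith
      have hexp : Real.exp (-γ/Δ) * Real.exp ((1/(2*Δ))*γ) = Real.exp (-(1/(2*Δ))*γ) := by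
        rw [← Real.exp_add]
        congr 1
        field_simp
        ring
      rw [Real.norm_eq_abs, abs_of_nonneg (by positivity)]
      calc (γ/Δ)^r * Real.exp (-γ/Δ) / (1+γ) * Real.exp ((1/(2*Δ))*γ)
          = (γ/Δ)^r * (Real.exp (-γ/Δ) * Real.exp ((1/(2*Δ))*γ)) / (1+γ) := by ring
        _ = (γ/Δ)^r * Real.exp (-(1/(2*Δ))*γ) / (1+γ) := by rw [hexp]
        _ ≤ (γ/Δ)^r * Real.exp (-(1/(2*Δ))*γ) / 1 := by
            have hnum : (0:ℝ) ≤ (γ/Δ)^r * Real.exp (-(1/(2*Δ))*γ) := by positivity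
            gcongr
            linarith
        _ = (1/Δ)^r * (γ^r * Real.exp (-(1/(2*Δ))*γ)) := by
            rw [div_one, div_pow]
            ring

private lemma sum_div_eq (Δ : ℝ) (s : Finset ℕ) (A : ℕ → ℝ) (N : ℕ → ℕ) (γ : ℝ) :
    (∑ j ∈ s, A j * Real.exp (-γ/Δ) *
        ∑ r ∈ Finset.range (N j), (γ/Δ)^r / (Nat.factorial r : ℝ)) / (1+γ)
      = ∑ j ∈ s, ∑ r ∈ Finset.range (N j),
          (A j / (Nat.factorial r : ℝ)) * ((γ/Δ)^r * Real.exp (-γ/Δ) / (1+γ)) := by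
  rw [Finset.sum_div]
  refine Finset.sum_congr rfl fun j _ => ?_
  rw [Finset.mul_sum, Finset.sum_div]
  exact Finset.sum_congr rfl fun r _ => by ring

private lemma fam_int (Δ : ℝ) (hΔ : 0 < Δ) (s : Finset ℕ) (A : ℕ → ℝ) (N : ℕ → ℕ) :
    IntegrableOn (fun γ : ℝ => (∑ j ∈ s, A j * Real.exp (-γ/Δ) *
        ∑ r ∈ Finset.range (N j), (γ/Δ)^r / (Nat.factorial r : ℝ)) / (1+γ)) (Set.Ioi 0) := by
  have h : IntegrableOn (fun γ : ℝ => ∑ j ∈ s, ∑ r ∈ Finset.range (N j),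
      (A j / (Nat.factorial r : ℝ)) * ((γ/Δ)^r * Real.exp (-γ/Δ) / (1+γ))) (Set.Ioi 0) := by
    apply integrable_finset_sum
    intro j _
    apply integrable_finset_sum
    intro r _
    exact (IB Δ hΔ r).const_mul _
  exact h.congr (Filter.EventuallyEq.of_eq (funext fun γ => (sum_div_eq Δ s A N γ).symm))

private lemma fam_val (Δ : ℝ) (hΔ : 0 < Δ) (s : Finset ℕ) (A : ℕ → ℝ) (N : ℕ → ℕ) :
    ∫ γ in Set.Ioi (0:ℝ), (∑ j ∈ s, A j * Real.exp (-γ/Δ) *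
        ∑ r ∈ Finset.range (N j), (γ/Δ)^r / (Nat.factorial r : ℝ)) / (1+γ)
      = Real.exp (1/Δ) * ∑ j ∈ s, A j *
          ∑ r ∈ Finset.range (N j), (1/Δ)^r * Gammau (-(r:ℝ)) (1/Δ) := by
  rw [setIntegral_congr_fun measurableSet_Ioi (fun γ _ => sum_div_eq Δ s A N γ)]
  rw [integral_finset_sum _ (fun j _ =>
    integrable_finset_sum _ fun r _ => (IB Δ hΔ r).const_mul _)]
  rw [Finset.mul_sum]
  refine Finset.sum_congr rfl fun j _ => ?_
  rw [integral_finset_sum _ (fun r _ => (IB Δ hΔ r).const_mul _), Finset.mul_sum,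
      Finset.mul_sum]
  refine Finset.sum_congr rfl fun r _ => ?_
  rw [integral_const_mul, subst_lemma Δ hΔ r, integral_main (1/Δ) (by positivity) r]
  have hfac : (Nat.factorial r : ℝ) ≠ 0 := Nat.cast_ne_zero.mpr r.factorial_ne_zero
  field_simp

end Helpers

open MeasureTheory in
/-- Closed-form average capacity of a κ-μ shadowed channel, case `m < μ` (evaluation of
`C̄_E` in Appendix E, Eq. (E.1)): `(1/ln 2)∫₀^∞ (1−F(γ))/(1+γ) dγ
 = (1/ln 2)(e^{1/Δ₁} Σ_{j=1}^{μ−m} A₁ⱼ Σ_{r=0}^{μ−m−j} (1/Δ₁)^r Γᵤ(−r, 1/Δ₁)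
   + e^{1/Δ₂} Σ_{j=1}^{m} A₂ⱼ Σ_{r=0}^{m−j} (1/Δ₂)^r Γᵤ(−r, 1/Δ₂))`. -/
theorem stmt18 (g κ : ℝ) (μ m : ℕ) (hg : 0 < g) (hκ : 0 < κ)
    (hm : 1 ≤ m) (hmμ : m < μ) :
    ((1 / Real.log 2) * ∫ γ in Set.Ioi (0 : ℝ), (1 - Fcdf1 g κ μ m γ) / (1 + γ)) =
      (1 / Real.log 2) *
        (Real.exp (1 / Δ₁ g κ μ) *
            ∑ j ∈ Finset.Icc 1 (μ - m), A1 κ μ m j *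
              ∑ r ∈ Finset.range (μ - m - j + 1),
                (1 / Δ₁ g κ μ) ^ r * Gammau (-(r : ℝ)) (1 / Δ₁ g κ μ)
          + Real.exp (1 / Δ₂ g κ μ m) *
            ∑ j ∈ Finset.Icc 1 m, A2 κ μ m j *
              ∑ r ∈ Finset.range (m - j + 1),
                (1 / Δ₂ g κ μ m) ^ r * Gammau (-(r : ℝ)) (1 / Δ₂ g κ μ m)) := by
  have hμpos : (0:ℝ) < μ := by
    have : 0 < μ := lt_of_le_of_lt (Nat.zero_le m) hmμ
    exact_mod_cast this
  have hmpos : (0:ℝ) < m := by exact_mod_cast hm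
  have hΔ1 : 0 < Δ₁ g κ μ := by
    rw [Δ₁]
    apply div_pos hg (mul_pos hμpos (by linarith))
  have hΔ2 : 0 < Δ₂ g κ μ m := by
    rw [Δ₂]
    apply div_pos (mul_pos (div_pos (by positivity) hmpos) hg) (mul_pos hμpos (by linarith))
  have hpt : ∀ γ : ℝ, (1 - Fcdf1 g κ μ m γ) / (1 + γ)
      = (∑ j ∈ Finset.Icc 1 (μ - m), A1 κ μ m j * Real.exp (-γ / Δ₁ g κ μ) *
          ∑ r ∈ Finset.range (μ - m - j + 1), (γ / Δ₁ g κ μ) ^ r / (Nat.factorial r : ℝ)) / (1+γ)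
        + (∑ j ∈ Finset.Icc 1 m, A2 κ μ m j * Real.exp (-γ / Δ₂ g κ μ m) *
          ∑ r ∈ Finset.range (m - j + 1), (γ / Δ₂ g κ μ m) ^ r / (Nat.factorial r : ℝ)) / (1+γ) := by
    intro γ
    rw [← add_div]
    congr 1
    rw [Fcdf1]
    ring
  rw [setIntegral_congr_fun measurableSet_Ioi (fun γ _ => hpt γ)]
  rw [integral_add
    (fam_int (Δ₁ g κ μ) hΔ1 (Finset.Icc 1 (μ - m)) (A1 κ μ m) (fun j => μ - m - j + 1))
    (fam_int (Δ₂ g κ μ m) hΔ2 (Finset.Icc 1 m) (A2 κ μ m) (fun j => m - j + 1))]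
  rw [fam_val (Δ₁ g κ μ) hΔ1 (Finset.Icc 1 (μ - m)) (A1 κ μ m) (fun j => μ - m - j + 1),
      fam_val (Δ₂ g κ μ m) hΔ2 (Finset.Icc 1 m) (A2 κ μ m) (fun j => m - j + 1)]
end

section
/- Closed-form average capacity of a κ-μ shadowed channel, case m ≥ μ (evaluation of C̄_E in Appendix E, Eq. (E.4)): assume m ≥ μ ≥ 1 and let F be the κ-μ shadowed CDF. Then (1/ln 2)·∫₀^∞ (1 − F(γ))/(1+γ) dγ = (1/ln 2)·e^{1/Δ₂}·Σ_{j=0}^{m−μ} Bⱼ·Σ_{r=0}^{m−j−1} (1/Δ₂)^r·Γᵤ(−r, 1/Δ₂). -/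
section Aux

open MeasureTheory Set Real Filter

private lemma shift_Ioi' (g : ℝ → ℝ) (a d : ℝ) :
    ∫ x in Ioi a, g (x + d) = ∫ x in Ioi (a + d), g x := by
  rw [← integral_indicator measurableSet_Ioi, ← integral_indicator measurableSet_Ioi,
    ← integral_add_right_eq_self ((Ioi (a + d)).indicator g) d]
  congr 1
  ext x
  by_cases h : x ∈ Ioi a
  · rw [indicator_of_mem h, indicator_of_mem (by simpa [mem_Ioi] using add_lt_add_right h d)]
  · rw [indicator_of_notMem h, indicator_of_notMem (by simp [mem_Ioi] at h ⊢; linarith)]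

private lemma intM' (c : ℝ) (hc : 0 < c) (n : ℕ) :
    IntegrableOn (fun x : ℝ => Real.exp (-(c * x)) / (1 + x) ^ n) (Ioi 0) := by
  apply Integrable.mono' (g := fun x : ℝ => Real.exp (-c * x))
  · exact exp_neg_integrableOn_Ioi 0 hc
  · apply Measurable.aestronglyMeasurable; fun_prop
  · filter_upwards [self_mem_ae_restrict measurableSet_Ioi] with x hx
    have hx' : (0:ℝ) < x := hx
    have h1 : (1:ℝ) ≤ (1 + x) ^ n := one_le_pow₀ (by linarith)
    rw [norm_div, norm_pow, Real.norm_eq_abs, Real.norm_eq_abs, abs_exp,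
      abs_of_nonneg (by linarith : (0:ℝ) ≤ 1 + x), neg_mul]
    exact div_le_of_le_mul₀ (by positivity) (by positivity)
      (le_mul_of_one_le_right (exp_pos _).le h1)

private lemma intP' (c : ℝ) (hc : 0 < c) (n : ℕ) :
    IntegrableOn (fun x : ℝ => x ^ n * Real.exp (-(c * x))) (Ioi 0) := by
  have := integrableOn_rpow_mul_exp_neg_mul_rpow (p := 1) (s := (n:ℝ)) (b := c)
    (by linarith [Nat.cast_nonneg (α:=ℝ) n]) zero_lt_one hc
  apply this.congr_fun ?_ measurableSet_Ioi
  intro x hx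
  simp [Real.rpow_natCast, Real.rpow_one]

private lemma intPval' (c : ℝ) (hc : 0 < c) (n : ℕ) :
    ∫ x in Ioi (0:ℝ), x ^ n * Real.exp (-(c * x))
      = (n.factorial : ℝ) / c ^ (n + 1) := by
  have h := integral_rpow_mul_exp_neg_mul_Ioi (a := (n:ℝ) + 1) (r := c) (by positivity) hc
  rw [show ((n:ℝ) + 1 - 1) = (n:ℝ) by ring] at h
  have h2 : ∫ x in Ioi (0:ℝ), x ^ n * Real.exp (-(c * x))
      = ∫ t in Ioi (0:ℝ), t ^ ((n:ℝ)) * Real.exp (-(c * t)) := by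
    refine setIntegral_congr_fun measurableSet_Ioi (fun x hx => ?_)
    rw [Real.rpow_natCast]
  rw [h2, h, Real.Gamma_nat_eq_factorial n, one_div,
    show ((n:ℝ)+1) = ((n+1:ℕ):ℝ) by push_cast; ring, Real.rpow_natCast, inv_pow]
  field_simp

private lemma intL' (c : ℝ) (hc : 0 < c) (n : ℕ) :
    IntegrableOn (fun x : ℝ => (c*x) ^ n / (n.factorial:ℝ) * Real.exp (-(c*x)) / (1+x))
      (Ioi 0) := by
  apply Integrable.mono' (g := fun x : ℝ => (c^n / (n.factorial:ℝ)) * (x ^ n * Real.exp (-(c*x))))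
  · exact (intP' c hc n).const_mul _
  · apply Measurable.aestronglyMeasurable; fun_prop
  · filter_upwards [self_mem_ae_restrict measurableSet_Ioi] with x hx
    have hx' : (0:ℝ) < x := hx
    have h1x : (1:ℝ) ≤ 1 + x := by linarith
    rw [Real.norm_eq_abs, abs_of_nonneg (by positivity)]
    rw [mul_pow, div_le_iff₀ (by positivity : (0:ℝ) < 1 + x),
      show c^n * x^n / (n.factorial:ℝ) * Real.exp (-(c*x))
        = c^n / (n.factorial:ℝ) * (x^n * Real.exp (-(c*x))) by ring]
    exact le_mul_of_one_le_right (by positivity) h1x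

private lemma gamma_eq' (c : ℝ) (hc : 0 < c) (n : ℕ) :
    Real.exp c * c ^ n * Gammau (-(n:ℝ)) c
      = ∫ x in Ioi (0:ℝ), Real.exp (-(c*x)) / (1+x)^(n+1) := by
  have h1 := shift_Ioi' (fun t => t ^ (-(n:ℝ) - 1) * Real.exp (-t)) 0 c
  rw [zero_add] at h1
  have h2 := integral_comp_mul_left_Ioi
    (fun y => (y + c) ^ (-(n:ℝ) - 1) * Real.exp (-(y + c))) 0 hc
  rw [mul_zero] at h2
  have h3 : ∫ x in Ioi (0:ℝ), (c * x + c) ^ (-(n:ℝ) - 1) * Real.exp (-(c * x + c))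
      = ∫ x in Ioi (0:ℝ), (c ^ (-(n:ℝ) - 1) * Real.exp (-c))
          * (Real.exp (-(c*x)) / (1+x)^(n+1)) := by
    refine setIntegral_congr_fun measurableSet_Ioi (fun x hx => ?_)
    have hx0 : 0 < x := hx
    have h1x : (0:ℝ) < 1 + x := by linarith
    have : c * x + c = c * (1 + x) := by ring
    rw [this, Real.mul_rpow hc.le h1x.le,
      show (-(n:ℝ) - 1) = -((n+1:ℕ):ℝ) by push_cast; ring,
      Real.rpow_neg h1x.le, Real.rpow_natCast,
      show -(c * (1 + x)) = -(c*x) + -c by ring, Real.exp_add]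
    ring
  have h2' : ∫ x in Ioi (0:ℝ), (c*x + c) ^ (-(n:ℝ)-1) * Real.exp (-(c*x+c))
      = c⁻¹ * ∫ x in Ioi (0:ℝ), (x + c) ^ (-(n:ℝ)-1) * Real.exp (-(x+c)) := by
    simpa using h2
  have h4 : Gammau (-(n:ℝ)) c
      = c * ((c ^ (-(n:ℝ) - 1) * Real.exp (-c))
          * ∫ x in Ioi (0:ℝ), Real.exp (-(c*x)) / (1+x)^(n+1)) := by
    rw [Gammau, ← h1, ← integral_const_mul, ← h3, h2', ← mul_assoc,
      mul_inv_cancel₀ hc.ne', one_mul]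
  rw [h4, ← Real.rpow_natCast c n,
    show Real.exp c * c ^ ((n:ℕ):ℝ) * (c * (c ^ (-(n:ℝ) - 1) * Real.exp (-c)
        * ∫ x in Ioi (0:ℝ), Real.exp (-(c*x)) / (1+x)^(n+1)))
      = ((Real.exp c * Real.exp (-c)) * ((c ^ ((n:ℕ):ℝ) * c ^ (-(n:ℝ)-1)) * c))
        * ∫ x in Ioi (0:ℝ), Real.exp (-(c*x)) / (1+x)^(n+1) by ring,
    ← Real.exp_add, ← Real.rpow_add hc]
  norm_num
  rw [show ((n:ℝ) + (-(n:ℝ) - 1)) = (-1 : ℝ) by ring, Real.rpow_neg_one,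
    inv_mul_cancel₀ hc.ne', one_mul]

private lemma Mrec' (c : ℝ) (hc : 0 < c) (n : ℕ) :
    ∫ x in Ioi (0:ℝ), Real.exp (-(c*x)) / (1+x)^(n+2)
      = 1/((n:ℝ)+1) - (c/((n:ℝ)+1)) * ∫ x in Ioi (0:ℝ), Real.exp (-(c*x)) / (1+x)^(n+1) := by
  set F : ℝ → ℝ := fun x => -(1/((n:ℝ)+1)) * (Real.exp (-(c*x)) * ((1+x)^(n+1))⁻¹) with hF
  set F' : ℝ → ℝ := fun x =>
    (c/((n:ℝ)+1)) * (Real.exp (-(c*x)) / (1+x)^(n+1)) + Real.exp (-(c*x)) / (1+x)^(n+2) with hF'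
  have hderiv : ∀ x ∈ Ici (0:ℝ), HasDerivAt F (F' x) x := by
    intro x hx
    have hx0 : (0:ℝ) ≤ x := hx
    have h1x : (0:ℝ) < 1 + x := by linarith
    have hexp : HasDerivAt (fun x : ℝ => Real.exp (-(c*x))) (-c * Real.exp (-(c*x))) x := by
      have := ((hasDerivAt_id x).const_mul (-c)).exp
      simpa [neg_mul, mul_comm] using this
    have hpow : HasDerivAt (fun x : ℝ => (1+x)^(n+1)) (((n:ℝ)+1) * (1+x)^n) x := by
      have := ((hasDerivAt_id x).const_add (1:ℝ)).fun_pow (n+1)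
      simpa [mul_comm, Nat.add_sub_cancel] using this
    have hinv : HasDerivAt (fun x : ℝ => ((1+x)^(n+1))⁻¹)
        (-(((n:ℝ)+1) * (1+x)^n) / ((1+x)^(n+1))^2) x := hpow.inv (by positivity)
    have := ((hexp.fun_mul hinv).const_mul (-(1/((n:ℝ)+1))))
    refine this.congr_deriv ?_
    rw [hF']
    have hne : (1+x) ≠ 0 := h1x.ne'
    have hn1 : ((n:ℝ)+1) ≠ 0 := by positivity
    field_simp
    ring
  have htend : Tendsto F atTop (nhds 0) := by
    have h1 : Tendsto (fun x : ℝ => Real.exp (-(c*x)) * ((1+x)^(n+1))⁻¹) atTop (nhds 0) := by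
      apply squeeze_zero' (g := fun x : ℝ => Real.exp (-(c*x)))
      · filter_upwards [eventually_ge_atTop (0:ℝ)] with x hx
        positivity
      · filter_upwards [eventually_ge_atTop (0:ℝ)] with x hx
        have h1 : (1:ℝ) ≤ (1+x)^(n+1) := one_le_pow₀ (by linarith)
        calc Real.exp (-(c*x)) * ((1+x)^(n+1))⁻¹
            ≤ Real.exp (-(c*x)) * 1 := by
              apply mul_le_mul_of_nonneg_left _ (exp_pos _).le
              rw [inv_le_one_iff₀]; right; exact h1
          _ = Real.exp (-(c*x)) := mul_one _
      · exact Real.tendsto_exp_neg_atTop_nhds_zero.comp (tendsto_id.const_mul_atTop hc)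
    have h2 := h1.const_mul (-(1/((n:ℝ)+1)))
    rw [mul_zero] at h2
    exact h2
  have hint : IntegrableOn F' (Ioi 0) :=
    ((intM' c hc (n+1)).const_mul _).add (intM' c hc (n+2))
  have key := integral_Ioi_of_hasDerivAt_of_tendsto' hderiv hint htend
  have hF0 : F 0 = -(1/((n:ℝ)+1)) := by simp [hF]
  rw [hF0, zero_sub, neg_neg] at key
  have hsplit : ∫ x in Ioi (0:ℝ), F' x
      = (c/((n:ℝ)+1)) * (∫ x in Ioi (0:ℝ), Real.exp (-(c*x)) / (1+x)^(n+1))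
        + ∫ x in Ioi (0:ℝ), Real.exp (-(c*x)) / (1+x)^(n+2) := by
    rw [hF']
    rw [integral_add ((intM' c hc (n+1)).const_mul _) (intM' c hc (n+2)), integral_const_mul]
  rw [hsplit] at key
  linarith

private lemma Lrec' (c : ℝ) (hc : 0 < c) (n : ℕ) :
    ∫ x in Ioi (0:ℝ), (c*x) ^ (n+1) / ((n+1).factorial:ℝ) * Real.exp (-(c*x)) / (1+x)
      = 1/((n:ℝ)+1) - (c/((n:ℝ)+1)) *
        ∫ x in Ioi (0:ℝ), (c*x) ^ n / (n.factorial:ℝ) * Real.exp (-(c*x)) / (1+x) := by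
  have hfac : (((n+1).factorial:ℝ)) = ((n:ℝ)+1) * (n.factorial:ℝ) := by
    rw [Nat.factorial_succ]; push_cast; ring
  have hptwise : ∀ x ∈ Ioi (0:ℝ),
      (c*x) ^ (n+1) / ((n+1).factorial:ℝ) * Real.exp (-(c*x)) / (1+x)
        = (c^(n+1) / ((n+1).factorial:ℝ)) * (x ^ n * Real.exp (-(c*x)))
          - (c/((n:ℝ)+1)) * ((c*x) ^ n / (n.factorial:ℝ) * Real.exp (-(c*x)) / (1+x)) := by
    intro x hx
    have hx' : (0:ℝ) < x := hx
    have h1x : (0:ℝ) < 1 + x := by linarith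
    have hn1 : ((n:ℝ)+1) ≠ 0 := by positivity
    have hf : ((n.factorial:ℝ)) ≠ 0 := by positivity
    rw [hfac]
    field_simp
    ring
  rw [setIntegral_congr_fun measurableSet_Ioi hptwise,
    integral_sub ((intP' c hc n).const_mul _) ((intL' c hc n).const_mul _),
    integral_const_mul, integral_const_mul, intPval' c hc n, hfac]
  have hf : ((n.factorial:ℝ)) ≠ 0 := by positivity
  have hn1 : ((n:ℝ)+1) ≠ 0 := by positivity
  have hcp : c ^ (n+1) ≠ 0 := by positivity
  field_simp

private lemma LM' (c : ℝ) (hc : 0 < c) (n : ℕ) :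
    ∫ x in Ioi (0:ℝ), (c*x) ^ n / (n.factorial:ℝ) * Real.exp (-(c*x)) / (1+x)
      = ∫ x in Ioi (0:ℝ), Real.exp (-(c*x)) / (1+x)^(n+1) := by
  induction n with
  | zero =>
    refine setIntegral_congr_fun measurableSet_Ioi (fun x hx => ?_)
    norm_num
  | succ n ih =>
    rw [Lrec' c hc n, Mrec' c hc n, ih]

private lemma keyL (c : ℝ) (hc : 0 < c) (r : ℕ) :
    ∫ x in Ioi (0:ℝ), (c*x) ^ r / (r.factorial:ℝ) * Real.exp (-(c*x)) / (1+x)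
      = Real.exp c * c ^ r * Gammau (-(r:ℝ)) c :=
  (LM' c hc r).trans (gamma_eq' c hc r).symm

end Aux

open MeasureTheory in
/-- Closed-form average capacity of a κ-μ shadowed channel, case `m ≥ μ` (evaluation of
`C̄_E` in Appendix E, Eq. (E.4)): `(1/ln 2)∫₀^∞ (1−F(γ))/(1+γ) dγ
 = (1/ln 2) e^{1/Δ₂} Σ_{j=0}^{m−μ} Bⱼ Σ_{r=0}^{m−j−1} (1/Δ₂)^r Γᵤ(−r, 1/Δ₂)`. -/
theorem stmt19 (g κ : ℝ) (μ m : ℕ) (hg : 0 < g) (hκ : 0 < κ)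
    (hμ : 1 ≤ μ) (hmμ : μ ≤ m) :
    ((1 / Real.log 2) * ∫ γ in Set.Ioi (0 : ℝ), (1 - Fcdf2 g κ μ m γ) / (1 + γ)) =
      (1 / Real.log 2) * Real.exp (1 / Δ₂ g κ μ m) *
        ∑ j ∈ Finset.range (m - μ + 1), Bco κ μ m j *
          ∑ r ∈ Finset.range (m - j),
            (1 / Δ₂ g κ μ m) ^ r * Gammau (-(r : ℝ)) (1 / Δ₂ g κ μ m) := by
  have hμ' : (0:ℝ) < (μ:ℝ) := by exact_mod_cast Nat.lt_of_lt_of_le Nat.zero_lt_one hμ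
  have hm' : (0:ℝ) < (m:ℝ) := by
    exact_mod_cast Nat.lt_of_lt_of_le (Nat.lt_of_lt_of_le Nat.zero_lt_one hμ) hmμ
  set d := Δ₂ g κ μ m with hdd
  have hd : 0 < d := by rw [hdd, Δ₂]; positivity
  set c := 1 / d with hcd
  have hc : 0 < c := by rw [hcd]; positivity
  have hfun : ∀ γ ∈ Set.Ioi (0:ℝ), (1 - Fcdf2 g κ μ m γ) / (1 + γ)
      = ∑ j ∈ Finset.range (m - μ + 1), ∑ r ∈ Finset.range (m - j),
          Bco κ μ m j * ((c*γ) ^ r / (r.factorial:ℝ) * Real.exp (-(c*γ)) / (1+γ)) := by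
    intro γ hγ
    have h1 : γ / d = c * γ := by rw [hcd]; field_simp
    have h2 : -γ / d = -(c * γ) := by rw [← h1]; ring
    simp only [Fcdf2, ← hdd, sub_sub_cancel, h1, h2]
    rw [Finset.sum_div]
    refine Finset.sum_congr rfl fun j _ => ?_
    rw [Finset.mul_sum, Finset.sum_div]
    refine Finset.sum_congr rfl fun r _ => ?_
    ring
  have hInt : (∫ γ in Set.Ioi (0:ℝ), (1 - Fcdf2 g κ μ m γ) / (1 + γ))
      = ∑ j ∈ Finset.range (m - μ + 1), ∑ r ∈ Finset.range (m - j),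
          Bco κ μ m j * (Real.exp c * c ^ r * Gammau (-(r:ℝ)) c) := by
    rw [setIntegral_congr_fun measurableSet_Ioi hfun,
      integral_finset_sum _
        (fun j _ => integrable_finset_sum _ (fun r _ => (intL' c hc r).const_mul _))]
    refine Finset.sum_congr rfl fun j _ => ?_
    rw [integral_finset_sum _ (fun r _ => (intL' c hc r).const_mul _)]
    refine Finset.sum_congr rfl fun r _ => ?_
    rw [integral_const_mul, keyL c hc r]
  rw [hInt, mul_assoc]
  congr 1
  rw [Finset.mul_sum]
  refine Finset.sum_congr rfl fun j _ => ?_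
  rw [Finset.mul_sum, Finset.mul_sum]
  refine Finset.sum_congr rfl fun r _ => ?_
  ring
end
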